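/- arXiv:2105.01469 — 5 statements merged into one kernel-verified Lean document; each statement's English description precedes it below -/
import Mathlib

section
/- Let G be a finite graph in which every vertex is incident to at least one edge, and let P2M(G) ⊆ ℝ^{E(G)} be the perfect 2-matching polytope of G, defined by the inequalities 0 ≤ x_e ≤ 2 for every edge e ∈ E(G) and the equalities ∑_{e incident to u} x_e = 2 for every vertex u ∈ V(G). A point x ∈ ℝ^{E(G)} is a vertex (extreme point) of P2M(G) if and only if there exist a matching M ⊆ E(G) and a collection C of cycles of G of odd length that are pairwise vertex-disjoint and vertex-disjoint from M, such that every vertex of G is covered either by an edge of M or by a cycle in C, and x is given by x_e = 2 for e ∈ M, x_e = 1 for every edge e lying on a cycle of C, and x_e = 0 for all other edges. -/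
/-!
Balinski's characterisation of the vertices of the perfect 2-matching polytope:
a point of the polytope is an extreme point iff it comes from an edge cover of `G`
consisting of a matching `M` (edges with value 2) together with pairwise vertex-disjoint
odd cycles, also disjoint from `M` (edges with value 1), all other edges having value 0.
-/

open Finset

/-- The perfect 2-matching polytope of a graph `G`, living in `ℝ^{E(G)}`:
`0 ≤ x_e ≤ 2` for every edge, and `∑_{e ∋ u} x_e = 2` for every vertex `u`. -/
def perfect2MatchingPolytope {V : Type} [Fintype V] [DecidableEq V]
    (G : SimpleGraph V) [Fintype G.edgeSet] : Set (G.edgeSet → ℝ) :=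
  {x | (∀ e : G.edgeSet, 0 ≤ x e ∧ x e ≤ 2) ∧
       (∀ u : V, ∑ e : G.edgeSet, (if u ∈ (e : Sym2 V) then x e else 0) = 2)}

open SimpleGraph



variable {V : Type} {G : SimpleGraph V}

lemma p2m_mem_support_of_mem_edges {u v : V} (p : G.Walk u v) {e : Sym2 V}
    (he : e ∈ p.edges) {w : V} (hw : w ∈ e) : w ∈ p.support := by
  induction e with
  | _ a b =>
    rcases Sym2.mem_iff.mp hw with rfl | rfl
    · exact p.fst_mem_support_of_mem_edges he
    · exact p.snd_mem_support_of_mem_edges he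

lemma p2m_end_unique {u v : V} (p : G.Walk u v) (hp : p.support.Nodup) :
    ∀ e₁ ∈ p.edges, ∀ e₂ ∈ p.edges, v ∈ e₁ → v ∈ e₂ → e₁ = e₂ := by
  induction p with
  | nil => intro e₁ h1; simp at h1
  | @cons a b w h q ih =>
    intro e₁ h1 e₂ h2 hv1 hv2
    rw [Walk.support_cons, List.nodup_cons] at hp
    have hwa : w ≠ a := fun hwa => hp.1 (hwa ▸ q.end_mem_support)
    by_cases hwb : w = b
    · subst hwb
      have : q = Walk.nil := by
        have := hp.2
        cases q with
        | nil => rfl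
        | cons h' q' =>
          exfalso
          rw [Walk.support_cons, List.nodup_cons] at this
          exact this.1 q'.end_mem_support
      subst this
      simp only [Walk.edges_cons, Walk.edges_nil, List.mem_singleton] at h1 h2
      rw [h1, h2]
    · -- w not in the first edge
      have hfst : ∀ e ∈ (Walk.cons h q).edges, w ∈ e → e ∈ q.edges := by
        intro e heq hwe
        rw [Walk.edges_cons, List.mem_cons] at heq
        rcases heq with rfl | h'
        · rcases Sym2.mem_iff.mp hwe with rfl | rfl
          · exact absurd rfl hwa
          · exact absurd rfl hwb
        · exact h'
      exact ih hp.2 e₁ (hfst e₁ h1 hv1) e₂ (hfst e₂ h2 hv2) hv1 hv2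

lemma p2m_end_exists {u v : V} (p : G.Walk u v) (hnil : ¬ p.Nil) :
    ∃ e ∈ p.edges, v ∈ e := by
  induction p with
  | nil => simp at hnil
  | @cons a b w h q ih =>
    by_cases hq : q.Nil
    · have hbw : b = w := by
        cases q with
        | nil => rfl
        | cons h' q' => simp at hq
      subst hbw
      exact ⟨s(a, b), by simp, by simp⟩
    · obtain ⟨e, he, hv⟩ := ih hq
      exact ⟨e, by simp [he], hv⟩

lemma p2m_cycle_two_edges {a : V} [DecidableEq V] (p : G.Walk a a) (hp : p.IsCycle)
    {u : V} (hu : u ∈ p.support) :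
    ∃ e₁ e₂, e₁ ∈ p.edges ∧ e₂ ∈ p.edges ∧ u ∈ e₁ ∧ u ∈ e₂ ∧ e₁ ≠ e₂ ∧
      ∀ e ∈ p.edges, u ∈ e → e = e₁ ∨ e = e₂ := by
  have hrot : ∀ {e : Sym2 V}, e ∈ (p.rotate u hu).edges ↔ e ∈ p.edges := fun {e} => (p.rotate_edges u hu).mem_iff
  set q := p.rotate u hu with hqdef
  have hq : q.IsCycle := hp.rotate hu
  suffices hs : ∃ e₁ e₂, e₁ ∈ q.edges ∧ e₂ ∈ q.edges ∧ u ∈ e₁ ∧ u ∈ e₂ ∧ e₁ ≠ e₂ ∧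
      ∀ e ∈ q.edges, u ∈ e → e = e₁ ∨ e = e₂ by
    obtain ⟨e₁, e₂, h1, h2, hu1, hu2, hne, huniq⟩ := hs
    exact ⟨e₁, e₂, hrot.mp h1, hrot.mp h2, hu1, hu2, hne,
      fun e he hue => huniq e (hrot.mpr he) hue⟩
  clear_value q
  clear hrot hqdef hu hp p
  cases q with
  | nil => exact absurd hq Walk.IsCycle.not_of_nil
  | @cons _ b _ h r =>
    obtain ⟨hr, hne⟩ := (Walk.cons_isCycle_iff r h).mp hq
    have hrlen : ¬ r.Nil := by
      rw [Walk.nil_iff_length_eq]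
      have := hq.three_le_length
      rw [Walk.length_cons] at this
      omega
    obtain ⟨e₂, he₂, hue₂⟩ := p2m_end_exists r hrlen
    refine ⟨s(u, b), e₂, by simp, by simp [he₂], by simp, hue₂, ?_, ?_⟩
    · rintro rfl; exact hne he₂
    · intro e he hue
      rw [Walk.edges_cons, List.mem_cons] at he
      rcases he with rfl | he
      · exact Or.inl rfl
      · exact Or.inr (p2m_end_unique r (Walk.isPath_def r |>.mp hr) e he e₂ he₂ hue hue₂)

lemma p2m_cycle_mem_support_iff {a : V} [DecidableEq V] (p : G.Walk a a) (hp : p.IsCycle)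
    (u : V) : u ∈ p.support ↔ ∃ e ∈ p.edges, u ∈ e := by
  constructor
  · intro hu
    obtain ⟨e₁, _, h1, _, hu1, _⟩ := p2m_cycle_two_edges p hp hu
    exact ⟨e₁, h1, hu1⟩
  · rintro ⟨e, he, hue⟩
    exact p2m_mem_support_of_mem_edges p he hue


lemma p2m_alt (g : Sym2 V → ℝ) :
    ∀ {u b v : V} (h : G.Adj u b) (r : G.Walk b v), (Walk.cons h r).IsPath →
    (∀ (w : V) (e₁ e₂ : Sym2 V), e₁ ∈ (Walk.cons h r).edges → e₂ ∈ (Walk.cons h r).edges →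
      w ∈ e₁ → w ∈ e₂ → e₁ ≠ e₂ → g e₁ + g e₂ = 2) →
    (∀ f ∈ (Walk.cons h r).edges, g f = g s(u, b) ∨ g f = 2 - g s(u, b)) ∧
    (∀ f ∈ (Walk.cons h r).edges, v ∈ f →
      (Even (Walk.cons h r).length → g f = 2 - g s(u, b)) ∧
      (Odd (Walk.cons h r).length → g f = g s(u, b))) := by
  intro u b v h r
  induction r generalizing u with
  | nil =>
    intro _ _
    constructor
    · intro f hf
      simp only [Walk.edges_cons, Walk.edges_nil, List.mem_singleton] at hf
      subst hf; exact Or.inl rfl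
    · intro f hf hv
      simp only [Walk.edges_cons, Walk.edges_nil, List.mem_singleton] at hf
      subst hf
      constructor
      · intro hev; simp [Walk.length_cons, Walk.length_nil] at hev
      · intro _; rfl
  | @cons b b2 v h' r' ih =>
    intro hpath H
    have hpath' : (Walk.cons h' r').IsPath := hpath.of_cons
    have hsub : ∀ f ∈ (Walk.cons h' r').edges, f ∈ (Walk.cons h (Walk.cons h' r')).edges := by
      intro f hf; simp only [Walk.edges_cons, List.mem_cons] at hf ⊢; tauto
    have H' : ∀ (w : V) (e₁ e₂ : Sym2 V), e₁ ∈ (Walk.cons h' r').edges →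
        e₂ ∈ (Walk.cons h' r').edges → w ∈ e₁ → w ∈ e₂ → e₁ ≠ e₂ → g e₁ + g e₂ = 2 :=
      fun w e₁ e₂ h1 h2 => H w e₁ e₂ (hsub e₁ h1) (hsub e₂ h2)
    obtain ⟨iha, ihb⟩ := ih h' hpath' H'
    -- u is not b2
    have hub2 : u ≠ b2 := by
      rintro rfl
      have := (Walk.cons_isPath_iff h (Walk.cons h' r')).mp hpath
      exact this.2 (by simp [Walk.support_cons])
    have hne : s(u, b) ≠ s(b, b2) := by
      intro hEq
      rw [Sym2.eq_iff] at hEq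
      rcases hEq with ⟨rfl, rfl⟩ | ⟨h1, h2⟩
      · exact h.ne rfl
      · exact hub2 h1
    have hkey : g s(b, b2) = 2 - g s(u, b) := by
      have := H b s(u,b) s(b,b2) (by simp) (by simp [Walk.edges_cons]) (by simp) (by simp) hne
      linarith
    constructor
    · intro f hf
      rw [Walk.edges_cons, List.mem_cons] at hf
      rcases hf with rfl | hf
      · exact Or.inl rfl
      · rcases iha f hf with h1 | h1 <;> rw [h1, hkey]
        · exact Or.inr rfl
        · exact Or.inl (by ring)
    · intro f hf hv
      rw [Walk.edges_cons, List.mem_cons] at hf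
      rcases hf with rfl | hf
      · -- v ∈ s(u,b) : impossible since v in support of r' chain and path
        exfalso
        have hp := (Walk.cons_isPath_iff h (Walk.cons h' r')).mp hpath
        have hvs : v ∈ (Walk.cons h' r').support := Walk.end_mem_support _
        rcases Sym2.mem_iff.mp hv with rfl | rfl
        · exact hp.2 hvs
        · -- v = b : then cons h' r' is a closed walk with nodup support
          have := (Walk.isPath_def _).mp hp.1
          rw [Walk.support_cons, List.nodup_cons] at this
          exact this.1 r'.end_mem_support
      · obtain ⟨hbe, hbo⟩ := ihb f hf hv
        constructor
        · intro hev
          rw [Walk.length_cons, Nat.even_add_one] at hev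
          have := hbo (Nat.not_even_iff_odd.mp hev)
          rw [this, hkey]
        · intro hodd
          rw [Walk.length_cons] at hodd
          have hevsmall : Even (Walk.cons h' r').length := by
            rcases Nat.even_or_odd (Walk.cons h' r').length with he | ho
            · exact he
            · exfalso
              obtain ⟨m, hm⟩ := ho
              obtain ⟨m', hm'⟩ := hodd
              omega
          have := hbe hevsmall
          rw [this, hkey]; ring

lemma p2m_cycle_one {a : V} (p : G.Walk a a) (hp : p.IsCycle) (hodd : Odd p.length)
    (g : Sym2 V → ℝ)
    (H : ∀ (w : V) (e₁ e₂ : Sym2 V), e₁ ∈ p.edges → e₂ ∈ p.edges →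
      w ∈ e₁ → w ∈ e₂ → e₁ ≠ e₂ → g e₁ + g e₂ = 2) :
    ∀ e ∈ p.edges, g e = 1 := by
  cases p with
  | nil => exact absurd hp Walk.IsCycle.not_of_nil
  | @cons _ b _ h r =>
    obtain ⟨hr, hnein⟩ := (Walk.cons_isCycle_iff r h).mp hp
    have hlen3 := hp.three_le_length
    rw [Walk.length_cons] at hlen3
    cases r with
    | nil => simp at hlen3
    | @cons _ b2 _ h' r' =>
      -- the path from b to a is (cons h' r')
      have halt := p2m_alt g h' r' hr
        (fun w e₁ e₂ h1 h2 => H w e₁ e₂ (by simp [Walk.edges_cons] at h1 ⊢; tauto)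
          (by simp [Walk.edges_cons] at h2 ⊢; tauto))
      obtain ⟨iha, ihb⟩ := halt
      obtain ⟨e₂, he₂, hae₂⟩ := p2m_end_exists (Walk.cons h' r') (by simp)
      have hne01 : s(a, b) ≠ s(b, b2) := fun hEq => hnein (hEq ▸ (by simp : s(b,b2) ∈ (Walk.cons h' r').edges))
      have hne02 : s(a, b) ≠ e₂ := fun hEq => hnein (hEq ▸ he₂)
      have sum2b : g s(a, b) + g s(b, b2) = 2 :=
        H b s(a,b) s(b,b2) (by simp) (by simp [Walk.edges_cons]) (by simp) (by simp) hne01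
      have sum2a : g s(a, b) + g e₂ = 2 :=
        H a s(a,b) e₂ (by simp) (by simp [Walk.edges_cons] at he₂ ⊢; tauto) (by simp) hae₂ hne02
      have heven : Even (Walk.cons h' r').length := by
        rw [Walk.length_cons] at hodd
        rcases Nat.even_or_odd (Walk.cons h' r').length with he | ho
        · exact he
        · exfalso
          obtain ⟨m, hm⟩ := ho
          obtain ⟨m', hm'⟩ := hodd
          omega
      have he2val : g e₂ = 2 - g s(b, b2) := (ihb e₂ he₂ hae₂).1 heven
      have h01 : g s(a, b) = g s(b, b2) := by linarith
      have h0one : g s(a, b) = 1 := by linarith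
      intro e he
      rw [Walk.edges_cons, List.mem_cons] at he
      rcases he with rfl | he
      · exact h0one
      · rcases iha e he with hv | hv <;> rw [hv] <;> linarith


noncomputable def p2mAlt [DecidableEq V] : {v w : V} → G.Walk v w → ℝ → Sym2 V → ℝ
  | _, _, Walk.nil, _, _ => 0
  | _, _, @Walk.cons _ _ v b _ h p, s, e =>
      (if e = s(v, b) then s else 0) + p2mAlt p (-s) e

lemma p2mAlt_support [DecidableEq V] : ∀ {v w : V} (q : G.Walk v w) (s : ℝ) (e : Sym2 V),
    p2mAlt q s e ≠ 0 → e ∈ q.edges := by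
  intro v w q
  induction q with
  | nil => intro s e h; simp [p2mAlt] at h
  | @cons v b w h p ih =>
    intro s e hne
    rw [Walk.edges_cons, List.mem_cons]
    by_cases he : e = s(v, b)
    · exact Or.inl he
    · refine Or.inr (ih (-s) e ?_)
      simp only [p2mAlt, he, if_false, zero_add] at hne
      exact hne

lemma p2mAlt_first [DecidableEq V] {v b w : V} (h : G.Adj v b) (p : G.Walk b w) (s : ℝ)
    (hne : s(v, b) ∉ p.edges) : p2mAlt (Walk.cons h p) s s(v, b) = s := by
  have : p2mAlt p (-s) s(v, b) = 0 := by
    by_contra hc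
    exact hne (p2mAlt_support p (-s) _ hc)
  simp [p2mAlt, this]

lemma p2mAlt_sum [DecidableEq V] [Fintype G.edgeSet] :
    ∀ {v w : V} (q : G.Walk v w) (s : ℝ) (u : V),
    ∑ e : G.edgeSet, (if u ∈ (e : Sym2 V) then p2mAlt q s (e : Sym2 V) else 0)
      = (if u = v then s else 0) + (if u = w then -((-1) ^ q.length * s) else 0) := by
  intro v w q
  induction q with
  | nil =>
    intro s u
    simp only [p2mAlt, Walk.length_nil, pow_zero, one_mul]
    rw [Finset.sum_eq_zero (fun e _ => by split_ifs <;> rfl)]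
    split_ifs <;> ring
  | @cons v b w h p ih =>
    intro s u
    have hsplit : ∀ e : G.edgeSet,
        (if u ∈ (e : Sym2 V) then p2mAlt (Walk.cons h p) s (e : Sym2 V) else 0)
        = (if u ∈ (e : Sym2 V) then (if (e : Sym2 V) = s(v, b) then s else 0) else 0)
          + (if u ∈ (e : Sym2 V) then p2mAlt p (-s) (e : Sym2 V) else 0) := by
      intro e
      simp only [p2mAlt]
      split_ifs <;> ring
    rw [Finset.sum_congr rfl (fun e _ => hsplit e), Finset.sum_add_distrib, ih (-s) u]
    have hfirst : ∑ e : G.edgeSet,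
        (if u ∈ (e : Sym2 V) then (if (e : Sym2 V) = s(v, b) then s else 0) else 0)
        = if u ∈ s(v, b) then s else 0 := by
      rw [Finset.sum_eq_single (⟨s(v, b), (G.mem_edgeSet).mpr h⟩ : G.edgeSet)]
      · simp
      · intro e _ hne
        have : (e : Sym2 V) ≠ s(v, b) := fun hc => hne (Subtype.ext hc)
        simp [this]
      · intro hc; exact absurd (Finset.mem_univ _) hc
    rw [hfirst]
    have hvb : v ≠ b := h.ne
    rw [Walk.length_cons]
    by_cases h1 : u = v <;> by_cases h2 : u = b <;> by_cases h3 : u = w <;>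
      simp_all [Sym2.mem_iff, pow_succ] <;> ring

section



variable {V : Type} [Fintype V] [DecidableEq V] {G : SimpleGraph V} [Fintype G.edgeSet]
  {x : G.edgeSet → ℝ}

lemma p2m_perturb (hx : x ∈ Set.extremePoints ℝ (perfect2MatchingPolytope G))
    (d : G.edgeSet → ℝ)
    (hd0 : ∀ e, (x e ≤ 0 ∨ 2 ≤ x e) → d e = 0)
    (hdsum : ∀ u : V, ∑ e : G.edgeSet, (if u ∈ (e : Sym2 V) then d e else 0) = 0) :
    d = 0 := by
  obtain ⟨⟨hbd, hsum⟩, hext⟩ := hx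
  set T : Finset ℝ := insert (1 : ℝ) ((univ : Finset G.edgeSet).image
    (fun e => if 0 < x e ∧ x e < 2 then min (x e) (2 - x e) / (|d e| + 1) else 1)) with hT
  have hTne : T.Nonempty := ⟨1, mem_insert_self _ _⟩
  set ε : ℝ := T.min' hTne with hεdef
  have hTpos : ∀ t ∈ T, 0 < t := by
    intro t ht
    rw [hT, mem_insert] at ht
    rcases ht with rfl | ht
    · norm_num
    · obtain ⟨e, _, rfl⟩ := mem_image.mp ht
      split_ifs with hfrac
      · apply div_pos
        · exact lt_min hfrac.1 (by linarith [hfrac.2])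
        · positivity
      · norm_num
  have hεpos : 0 < ε := hTpos _ (T.min'_mem hTne)
  have hεle : ∀ e : G.edgeSet, 0 < x e → x e < 2 →
      ε ≤ min (x e) (2 - x e) / (|d e| + 1) := by
    intro e h1 h2
    have : (if 0 < x e ∧ x e < 2 then min (x e) (2 - x e) / (|d e| + 1) else 1) ∈ T :=
      mem_insert_of_mem (mem_image_of_mem _ (mem_univ e))
    rw [if_pos ⟨h1, h2⟩] at this
    exact T.min'_le _ this
  have hbound : ∀ e : G.edgeSet, 0 < x e → x e < 2 → |ε * d e| ≤ min (x e) (2 - x e) := by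
    intro e h1 h2
    have h3 := hεle e h1 h2
    have h4 : 0 < |d e| + 1 := by positivity
    have h5 : ε * (|d e| + 1) ≤ min (x e) (2 - x e) := by
      rw [div_eq_mul_inv] at h3
      calc ε * (|d e| + 1) ≤ (min (x e) (2 - x e) * (|d e| + 1)⁻¹) * (|d e| + 1) := by
            apply mul_le_mul_of_nonneg_right h3 (le_of_lt h4)
        _ = min (x e) (2 - x e) := by field_simp
    rw [abs_mul, abs_of_pos hεpos]
    nlinarith [abs_nonneg (d e)]
  have hmem : ∀ (σ : ℝ), σ = 1 ∨ σ = -1 →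
      (fun e => x e + σ * ε * d e) ∈ perfect2MatchingPolytope G := by
    intro σ hσ
    have hσ1 : |σ| = 1 := by rcases hσ with rfl | rfl <;> simp
    constructor
    · intro e
      dsimp only
      rcases le_or_gt (x e) 0 with h1 | h1
      · rw [hd0 e (Or.inl h1)]; simpa using hbd e
      rcases le_or_gt 2 (x e) with h2 | h2
      · rw [hd0 e (Or.inr h2)]; simpa using hbd e
      have hb := hbound e h1 h2
      have habs : |σ * ε * d e| ≤ min (x e) (2 - x e) := by
        rw [mul_assoc, abs_mul, hσ1, one_mul]; exact hb
      rw [abs_le] at habs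
      have := min_le_left (x e) (2 - x e)
      have := min_le_right (x e) (2 - x e)
      constructor <;> linarith [habs.1, habs.2]
    · intro u
      have hsplit : ∀ e : G.edgeSet, (if u ∈ (e : Sym2 V) then x e + σ * ε * d e else 0)
          = (if u ∈ (e : Sym2 V) then x e else 0)
            + σ * ε * (if u ∈ (e : Sym2 V) then d e else 0) := by
        intro e; split_ifs <;> ring
      rw [Finset.sum_congr rfl (fun e _ => hsplit e), Finset.sum_add_distrib,
        ← Finset.mul_sum, hsum u, hdsum u, mul_zero, add_zero]
  have hy := hmem 1 (Or.inl rfl)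
  have hz := hmem (-1) (Or.inr rfl)
  have hseg : x ∈ openSegment ℝ (fun e => x e + 1 * ε * d e) (fun e => x e + (-1) * ε * d e) := by
    refine ⟨1/2, 1/2, by norm_num, by norm_num, by norm_num, ?_⟩
    funext e
    simp only [Pi.add_apply, Pi.smul_apply, smul_eq_mul]
    ring
  have := hext hy hz hseg
  funext e
  have h0 := congrFun this e
  simp only [one_mul, Pi.zero_apply] at h0 ⊢
  have : ε * d e = 0 := by linarith
  rcases mul_eq_zero.mp this with h | h
  · exact absurd h (ne_of_gt hεpos)
  · exact h

section
variable {V : Type} [Fintype V] [DecidableEq V] {G : SimpleGraph V} [Fintype G.edgeSet]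
  {x : G.edgeSet → ℝ}

lemma p2m_card_mem_sym2 (e : Sym2 V) (he : e ∈ G.edgeSet) :
    (univ.filter (fun u : V => u ∈ e)).card = 2 := by
  induction e with
  | _ a b =>
    have hab : a ≠ b := (G.mem_edgeSet.mp he).ne
    have : (univ.filter (fun u : V => u ∈ s(a, b))) = {a, b} := by
      ext u
      simp [Sym2.mem_iff]
    rw [this, card_insert_of_notMem (by simp [hab]), card_singleton]

/-- value of x on a non-fractional edge is 0 or 2 -/
lemma p2m_zero_or_two (hbd : ∀ e : G.edgeSet, 0 ≤ x e ∧ x e ≤ 2) (e : G.edgeSet)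
    (h : ¬ (0 < x e ∧ x e < 2)) : x e = 0 ∨ x e = 2 := by
  rcases (hbd e) with ⟨h0, h2⟩
  push_neg at h
  rcases le_or_gt (x e) 0 with h1 | h1
  · exact Or.inl (le_antisymm h1 h0)
  · exact Or.inr (le_antisymm h2 (h h1))

/-- a sum of x over a finset of edges each of value 0 or 2 equals twice a count -/
lemma p2m_sum_even (hbd : ∀ e : G.edgeSet, 0 ≤ x e ∧ x e ≤ 2) (B : Finset G.edgeSet)
    (hB : ∀ e ∈ B, ¬ (0 < x e ∧ x e < 2)) :
    ∑ e ∈ B, x e = 2 * ((B.filter (fun e => x e = 2)).card : ℝ) := by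
  rw [← Finset.sum_filter_add_sum_filter_not B (fun e => x e = 2)]
  have h1 : ∑ e ∈ B.filter (fun e => x e = 2), x e
      = 2 * ((B.filter (fun e => x e = 2)).card : ℝ) := by
    rw [Finset.sum_congr rfl (fun e he => (mem_filter.mp he).2), Finset.sum_const,
      nsmul_eq_mul, mul_comm]
  have h2 : ∑ e ∈ B.filter (fun e => ¬ x e = 2), x e = 0 := by
    apply Finset.sum_eq_zero
    intro e he
    rw [mem_filter] at he
    rcases p2m_zero_or_two hbd e (hB e he.1) with h | h
    · exact h
    · exact absurd h he.2
  rw [h1, h2, add_zero]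

/-- at least two fractional edges at a vertex having one -/
lemma p2m_two_le_fractional (hbd : ∀ e : G.edgeSet, 0 ≤ x e ∧ x e ≤ 2)
    (hsum : ∀ u : V, ∑ e : G.edgeSet, (if u ∈ (e : Sym2 V) then x e else 0) = 2)
    (u : V) (e₀ : G.edgeSet) (hu : u ∈ (e₀ : Sym2 V)) (h1 : 0 < x e₀) (h2 : x e₀ < 2) :
    2 ≤ (univ.filter (fun e : G.edgeSet => u ∈ (e : Sym2 V) ∧ 0 < x e ∧ x e < 2)).card := by
  by_contra hlt
  push_neg at hlt
  set F := univ.filter (fun e : G.edgeSet => u ∈ (e : Sym2 V) ∧ 0 < x e ∧ x e < 2) with hF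
  have he₀F : e₀ ∈ F := by rw [hF, mem_filter]; exact ⟨mem_univ _, hu, h1, h2⟩
  have hFeq : F = {e₀} :=
    (Finset.eq_of_subset_of_card_le (Finset.singleton_subset_iff.mpr he₀F) (by simp; omega)).symm
  -- split the vertex sum
  set A := univ.filter (fun e : G.edgeSet => u ∈ (e : Sym2 V)) with hA
  have hsumA : ∑ e ∈ A, x e = 2 := by
    rw [hA, Finset.sum_filter]; exact hsum u
  have hAsplit : ∑ e ∈ A.filter (fun e => 0 < x e ∧ x e < 2), x e
      + ∑ e ∈ A.filter (fun e => ¬ (0 < x e ∧ x e < 2)), x e = 2 := by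
    rw [Finset.sum_filter_add_sum_filter_not, hsumA]
  have hAF : A.filter (fun e => 0 < x e ∧ x e < 2) = F := by
    rw [hA, hF, Finset.filter_filter]
  rw [hAF, hFeq, Finset.sum_singleton] at hAsplit
  rw [p2m_sum_even hbd _ (fun e he => (mem_filter.mp he).2)] at hAsplit
  set c := ((A.filter (fun e => ¬ (0 < x e ∧ x e < 2))).filter (fun e => x e = 2)).card
  rcases Nat.eq_zero_or_pos c with hc | hc
  · rw [hc] at hAsplit; push_cast at hAsplit; linarith
  · have : (1 : ℝ) ≤ (c : ℝ) := by exact_mod_cast hc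
    linarith

lemma p2m_two_fractional (hx : x ∈ Set.extremePoints ℝ (perfect2MatchingPolytope G))
    (u : V) (e₀ : G.edgeSet) (hu : u ∈ (e₀ : Sym2 V)) (h1 : 0 < x e₀) (h2 : x e₀ < 2) :
    (univ.filter (fun e : G.edgeSet => u ∈ (e : Sym2 V) ∧ 0 < x e ∧ x e < 2)).card = 2 := by
  have hbd := hx.1.1
  have hsum := hx.1.2
  set Ffin : Finset G.edgeSet := univ.filter (fun e => 0 < x e ∧ x e < 2) with hFfin
  set Dcard : V → ℕ := fun v =>
    (univ.filter (fun e : G.edgeSet => v ∈ (e : Sym2 V) ∧ 0 < x e ∧ x e < 2)).card with hDcard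
  set Vc : Finset V := univ.filter (fun v => 0 < Dcard v) with hVc
  -- the incidence linear map
  set L : (↥Ffin → ℝ) →ₗ[ℝ] (↥Vc → ℝ) := {
    toFun := fun φ v => ∑ e : ↥Ffin, (if (v : V) ∈ ((e : G.edgeSet) : Sym2 V) then φ e else 0)
    map_add' := by
      intro φ ψ
      funext v
      simp only [Pi.add_apply]
      rw [← Finset.sum_add_distrib]
      exact Finset.sum_congr rfl (fun e _ => by split_ifs <;> simp)
    map_smul' := by
      intro r φ
      funext v
      simp only [Pi.smul_apply, RingHom.id_apply, smul_eq_mul]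
      rw [Finset.mul_sum]
      exact Finset.sum_congr rfl (fun e _ => by split_ifs <;> simp) } with hL
  have hLinj : Function.Injective L := by
    rw [← LinearMap.ker_eq_bot, LinearMap.ker_eq_bot']
    intro φ hφ
    set d : G.edgeSet → ℝ := fun e => if h : e ∈ Ffin then φ ⟨e, h⟩ else 0 with hd
    have hd0 : ∀ e, (x e ≤ 0 ∨ 2 ≤ x e) → d e = 0 := by
      intro e he
      rw [hd]
      have : e ∉ Ffin := by
        rw [hFfin, mem_filter]
        rintro ⟨-, hh1, hh2⟩
        rcases he with he | he <;> linarith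
      simp [this]
    have hdsum : ∀ v : V, ∑ e : G.edgeSet, (if v ∈ (e : Sym2 V) then d e else 0) = 0 := by
      intro v
      have hzero : ∀ e ∈ (univ : Finset G.edgeSet).filter (fun e => ¬ (0 < x e ∧ x e < 2)),
          (if v ∈ (e : Sym2 V) then d e else 0) = 0 := by
        intro e he
        rw [mem_filter] at he
        have : e ∉ Ffin := by rw [hFfin, mem_filter]; tauto
        simp [hd, this]
      have hsplit := Finset.sum_filter_add_sum_filter_not (univ : Finset G.edgeSet)
        (fun e => 0 < x e ∧ x e < 2) (fun e => if v ∈ (e : Sym2 V) then d e else 0)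
      rw [Finset.sum_eq_zero hzero, add_zero] at hsplit
      rw [← hsplit]
      rw [← hFfin]
      by_cases hv : v ∈ Vc
      · have hz := congrFun hφ ⟨v, hv⟩
        simp only [Pi.zero_apply] at hz
        have hstep : ∑ e ∈ Ffin, (if v ∈ (e : Sym2 V) then d e else 0)
            = ∑ e : ↥Ffin, (if (v : V) ∈ ((e : G.edgeSet) : Sym2 V) then φ e else 0) := by
          rw [← Finset.sum_coe_sort Ffin]
          apply Finset.sum_congr rfl
          intro e _
          have heF : (e : G.edgeSet) ∈ Ffin := e.2
          simp only [hd, dif_pos heF]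
        exact hstep.trans hz
      · -- no fractional edge at v
        apply Finset.sum_eq_zero
        intro e he
        rw [hFfin, mem_filter] at he

        have hvn : ¬ (v ∈ (e : Sym2 V)) := by
          intro hvmem
          apply hv
          rw [hVc, mem_filter]
          refine ⟨mem_univ _, ?_⟩
          rw [hDcard]
          refine Finset.card_pos.mpr ⟨e, ?_⟩
          rw [mem_filter]
          exact ⟨mem_univ _, hvmem, he.2⟩
        simp [hvn]
    have := p2m_perturb hx d hd0 hdsum
    funext e
    have he := congrFun this e
    rw [hd] at he
    simp only [dif_pos e.2, Pi.zero_apply] at he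
    rw [Pi.zero_apply]
    simpa using he
  have hcard_le : Ffin.card ≤ Vc.card := by
    have h1 := LinearMap.finrank_le_finrank_of_injective hLinj
    rwa [Module.finrank_fintype_fun_eq_card, Module.finrank_fintype_fun_eq_card,
      Fintype.card_coe, Fintype.card_coe] at h1
  -- handshake
  have hhand : ∑ v : V, Dcard v = 2 * Ffin.card := by
    have : ∀ v : V, Dcard v = ∑ e ∈ Ffin, (if v ∈ (e : Sym2 V) then 1 else 0) := by
      intro v
      simp only [hDcard]
      rw [← Finset.sum_filter]
      simp only [Finset.sum_const, smul_eq_mul, mul_one]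
      congr 1
      rw [hFfin, Finset.filter_filter]
      apply Finset.filter_congr
      intro e _
      tauto
    rw [Finset.sum_congr rfl (fun v _ => this v), Finset.sum_comm]
    have : ∀ e ∈ Ffin, ∑ v : V, (if v ∈ (e : Sym2 V) then 1 else 0) = 2 := by
      intro e he
      rw [← Finset.sum_filter]
      simp only [Finset.sum_const, smul_eq_mul, mul_one]
      exact p2m_card_mem_sym2 (e : Sym2 V) e.2
    rw [Finset.sum_congr rfl this, Finset.sum_const, smul_eq_mul]
    ring
  have hVcsum : ∑ v ∈ Vc, Dcard v = 2 * Ffin.card := by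
    rw [← hhand]
    apply Finset.sum_subset (Finset.subset_univ _)
    intro v _ hv
    rw [hVc, mem_filter] at hv
    push_neg at hv
    have := hv (mem_univ v)
    omega
  have hge : ∀ v ∈ Vc, 2 ≤ Dcard v := by
    intro v hv
    rw [hVc, mem_filter] at hv
    obtain ⟨e₁, he₁⟩ := Finset.card_pos.mp hv.2
    rw [mem_filter] at he₁
    exact p2m_two_le_fractional hbd hsum v e₁ he₁.2.1 he₁.2.2.1 he₁.2.2.2
  have hall : ∀ v ∈ Vc, Dcard v = 2 := by
    by_contra hc
    push_neg at hc
    obtain ⟨v₀, hv₀, hne⟩ := hc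
    have hlt : ∑ v ∈ Vc, 2 < ∑ v ∈ Vc, Dcard v := by
      apply Finset.sum_lt_sum (fun v hv => hge v hv)
      exact ⟨v₀, hv₀, lt_of_le_of_ne (hge v₀ hv₀) (Ne.symm hne)⟩
    rw [Finset.sum_const, smul_eq_mul, mul_comm, hVcsum] at hlt
    omega
  apply hall
  rw [hVc, mem_filter]
  refine ⟨mem_univ _, ?_⟩
  rw [hDcard]
  refine Finset.card_pos.mpr ⟨e₀, ?_⟩
  rw [mem_filter]
  exact ⟨mem_univ _, hu, h1, h2⟩
end

section
variable {V : Type} [Fintype V] [DecidableEq V] {G : SimpleGraph V} [Fintype G.edgeSet]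

/-- the edge `z` is a fractional edge of `x` -/
def p2mFrac (x : G.edgeSet → ℝ) (z : Sym2 V) : Prop :=
  ∃ h : z ∈ G.edgeSet, 0 < x ⟨z, h⟩ ∧ x ⟨z, h⟩ < 2

variable {x : G.edgeSet → ℝ}

lemma p2m_frac_coe (e : G.edgeSet) : p2mFrac x (e : Sym2 V) ↔ (0 < x e ∧ x e < 2) := by
  constructor
  · rintro ⟨h, h1, h2⟩
    have : (⟨(e : Sym2 V), h⟩ : G.edgeSet) = e := Subtype.ext rfl
    rw [this] at h1 h2
    exact ⟨h1, h2⟩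
  · intro h
    exact ⟨e.2, by simpa using h⟩

lemma p2m_reach {a₀ : V} {C : G.Walk a₀ a₀}
    (hclo : ∀ v ∈ C.support, ∀ z : V, G.Adj v z → p2mFrac x s(v, z) → s(v, z) ∈ C.edges) :
    ∀ {v w : V} (q : G.Walk v w), (∀ e ∈ q.edges, p2mFrac x e) → v ∈ C.support →
      w ∈ C.support := by
  intro v w q
  induction q with
  | nil => exact fun _ h => h
  | @cons v b w h r ih =>
    intro hfr hv
    have h1 : s(v, b) ∈ C.edges := hclo v hv b h (hfr _ (by simp))
    have hb : b ∈ C.support := p2m_mem_support_of_mem_edges C h1 (by simp)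
    exact ih (fun e he => hfr e (by simp [he])) hb

lemma p2m_pair_eq {e₁ e₂ f₁ f₂ : Sym2 V} {g : Sym2 V → ℝ}
    (hsum : g f₁ + g f₂ = 2) (hne : e₁ ≠ e₂)
    (h1 : e₁ = f₁ ∨ e₁ = f₂) (h2 : e₂ = f₁ ∨ e₂ = f₂) : g e₁ + g e₂ = 2 := by
  rcases h1 with rfl | rfl <;> rcases h2 with rfl | rfl
  · exact absurd rfl hne
  · exact hsum
  · linarith
  · exact absurd rfl hne

/-- There are exactly two fractional edges at any vertex of a fractional cycle,
namely the two cycle edges, and the values of `x` on them sum to 2. -/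
lemma p2m_cycle_local (hx : x ∈ Set.extremePoints ℝ (perfect2MatchingPolytope G))
    {a : V} {C : G.Walk a a} (hcyc : C.IsCycle)
    (hfr : ∀ e ∈ C.edges, p2mFrac x e) {v : V} (hv : v ∈ C.support)
    {e₁ e₂ : Sym2 V} (h1 : e₁ ∈ C.edges) (h2 : e₂ ∈ C.edges)
    (hv1 : v ∈ e₁) (hv2 : v ∈ e₂) (hne : e₁ ≠ e₂) :
    (∀ (h1' : e₁ ∈ G.edgeSet) (h2' : e₂ ∈ G.edgeSet), x ⟨e₁, h1'⟩ + x ⟨e₂, h2'⟩ = 2) ∧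
    (∀ z : V, G.Adj v z → p2mFrac x s(v, z) → s(v, z) = e₁ ∨ s(v, z) = e₂) := by
  have hbd := hx.1.1
  have hsum := hx.1.2
  have hm1 : e₁ ∈ G.edgeSet := C.edges_subset_edgeSet h1
  have hm2 : e₂ ∈ G.edgeSet := C.edges_subset_edgeSet h2
  set ehat1 : G.edgeSet := ⟨e₁, hm1⟩
  set ehat2 : G.edgeSet := ⟨e₂, hm2⟩
  have hfr1 := (p2m_frac_coe ehat1).mp (hfr _ h1)
  have hfr2 := (p2m_frac_coe ehat2).mp (hfr _ h2)
  have hehatne : ehat1 ≠ ehat2 := fun hc => hne (congrArg Subtype.val hc)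
  -- the filter of fractional edges at v is exactly {ehat1, ehat2}
  set Dv := univ.filter (fun e : G.edgeSet => v ∈ (e : Sym2 V) ∧ 0 < x e ∧ x e < 2) with hDv
  have hDv2 : Dv.card = 2 := p2m_two_fractional hx v ehat1 hv1 hfr1.1 hfr1.2
  have hsubD : ({ehat1, ehat2} : Finset G.edgeSet) ⊆ Dv := by
    intro e he
    rcases Finset.mem_insert.mp he with rfl | he
    · exact Finset.mem_filter.mpr ⟨mem_univ _, hv1, hfr1⟩
    · rw [Finset.mem_singleton] at he
      subst he
      exact Finset.mem_filter.mpr ⟨mem_univ _, hv2, hfr2⟩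
  have hpairc : ({ehat1, ehat2} : Finset G.edgeSet).card = 2 := by
    rw [Finset.card_insert_of_notMem (by simp [hehatne]), Finset.card_singleton]
  have hDeq : ({ehat1, ehat2} : Finset G.edgeSet) = Dv :=
    Finset.eq_of_subset_of_card_le hsubD (by omega)
  constructor
  · intro h1' h2'
    -- vertex sum at v
    set A := univ.filter (fun e : G.edgeSet => v ∈ (e : Sym2 V)) with hA
    have hsumA : ∑ e ∈ A, x e = 2 := by rw [hA, Finset.sum_filter]; exact hsum v
    have hAsplit : ∑ e ∈ A.filter (fun e => 0 < x e ∧ x e < 2), x e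
        + ∑ e ∈ A.filter (fun e => ¬ (0 < x e ∧ x e < 2)), x e = 2 := by
      rw [Finset.sum_filter_add_sum_filter_not, hsumA]
    have hAD : A.filter (fun e => 0 < x e ∧ x e < 2) = Dv := by
      rw [hA, hDv, Finset.filter_filter]
    rw [hAD, ← hDeq, Finset.sum_pair hehatne] at hAsplit
    rw [p2m_sum_even hbd _ (fun e he => (Finset.mem_filter.mp he).2)] at hAsplit
    set c := ((A.filter (fun e => ¬ (0 < x e ∧ x e < 2))).filter (fun e => x e = 2)).card
    have hxv : x ⟨e₁, h1'⟩ = x ehat1 := rfl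
    have hxv2 : x ⟨e₂, h2'⟩ = x ehat2 := rfl
    rcases Nat.eq_zero_or_pos c with hc | hc
    · rw [hc] at hAsplit; push_cast at hAsplit
      rw [hxv, hxv2]; linarith
    · exfalso
      have : (1 : ℝ) ≤ (c : ℝ) := by exact_mod_cast hc
      linarith [hfr1.1, hfr2.1]
  · intro z hadj hfz
    obtain ⟨hmz, hz1, hz2⟩ := hfz
    have : (⟨s(v, z), hmz⟩ : G.edgeSet) ∈ Dv :=
      Finset.mem_filter.mpr ⟨mem_univ _, by simp, hz1, hz2⟩
    rw [← hDeq] at this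
    rcases Finset.mem_insert.mp this with h | h
    · exact Or.inl (congrArg Subtype.val h)
    · rw [Finset.mem_singleton] at h
      exact Or.inr (congrArg Subtype.val h)

lemma p2m_exists_cycle (hx : x ∈ Set.extremePoints ℝ (perfect2MatchingPolytope G))
    {a : V} (e₀ : G.edgeSet) (ha : a ∈ (e₀ : Sym2 V)) (h1 : 0 < x e₀) (h2 : x e₀ < 2) :
    ∃ C : G.Walk a a, C.IsCycle ∧ (∀ e ∈ C.edges, p2mFrac x e) ∧
      (∀ v ∈ C.support, ∀ z : V, G.Adj v z → p2mFrac x s(v, z) → s(v, z) ∈ C.edges) := by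
  classical
  have hbd := hx.1.1
  haveI : Nonempty V := ⟨a⟩
  set P : ℕ → Prop := fun n => ∃ (c : V) (p : G.Walk a c), p.IsPath ∧
    (∀ e ∈ p.edges, p2mFrac x e) ∧ p.length = n with hP
  obtain ⟨b, hab⟩ := Sym2.mem_iff_exists.mp ha
  have hadj : G.Adj a b := G.mem_edgeSet.mp (hab ▸ e₀.2)
  have hfr₀ : p2mFrac x s(a, b) := hab ▸ ((p2m_frac_coe e₀).mpr ⟨h1, h2⟩)
  have hP1 : P 1 := by
    refine ⟨b, Walk.cons hadj Walk.nil, ?_, ?_, by simp⟩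
    · rw [Walk.cons_isPath_iff]
      exact ⟨Walk.IsPath.nil, by simp [hadj.ne]⟩
    · intro e he
      simp only [Walk.edges_cons, Walk.edges_nil, List.mem_singleton] at he
      subst he; exact hfr₀
  have hcard1 : 1 ≤ Fintype.card V := Fintype.card_pos
  set N := Nat.findGreatest P (Fintype.card V) with hN
  have hPN : P N := Nat.findGreatest_spec hcard1 hP1
  have hN1 : 1 ≤ N := Nat.le_findGreatest hcard1 hP1
  obtain ⟨c, p, hpath, hfrp, hlen⟩ := hPN
  have hpnil : ¬ p.Nil := by rw [Walk.nil_iff_length_eq]; omega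
  have hrevnil : ¬ p.reverse.Nil := by
    rw [Walk.nil_iff_length_eq, Walk.length_reverse]; omega
  obtain ⟨t, hct, q', hq'⟩ := Walk.not_nil_iff.mp hrevnil
  have hctmem : s(c, t) ∈ p.edges := by
    have : s(c, t) ∈ p.reverse.edges := by rw [hq']; simp
    rw [Walk.edges_reverse, List.mem_reverse] at this
    exact this
  obtain ⟨hmct, hct1, hct2⟩ := hfrp _ hctmem
  set ect : G.edgeSet := ⟨s(c, t), hmct⟩
  set Dc := univ.filter (fun e : G.edgeSet => c ∈ (e : Sym2 V) ∧ 0 < x e ∧ x e < 2) with hDc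
  have hD2 : Dc.card = 2 := p2m_two_fractional hx c ect (Sym2.mem_mk_left c t) hct1 hct2
  obtain ⟨f₂, hf₂D, hf₂ne⟩ := Finset.exists_mem_ne (s := Dc) (by omega) ect
  obtain ⟨-, hcf₂, hxf₂⟩ := Finset.mem_filter.mp hf₂D
  obtain ⟨z, hzf₂⟩ := Sym2.mem_iff_exists.mp hcf₂
  have hcz : G.Adj c z := G.mem_edgeSet.mp (hzf₂ ▸ f₂.2)
  have hzt : z ≠ t := by
    rintro rfl
    exact hf₂ne (Subtype.ext (by rw [hzf₂]))
  have hfrf₂ : p2mFrac x s(c, z) := hzf₂ ▸ ((p2m_frac_coe f₂).mpr hxf₂)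
  have hz_in_p : z ∈ p.support := by
    by_contra hzn
    have hrevpath : (Walk.cons hcz.symm p.reverse).IsPath := by
      rw [Walk.cons_isPath_iff]
      refine ⟨hpath.reverse, ?_⟩
      rw [Walk.support_reverse, List.mem_reverse]
      exact hzn
    have hp' : (p.concat hcz).IsPath := by
      rw [← Walk.isPath_reverse_iff, Walk.reverse_concat]
      exact hrevpath
    have hP' : P (N + 1) := by
      refine ⟨z, p.concat hcz, hp', ?_, by rw [Walk.length_concat, hlen]⟩
      intro e he
      rw [Walk.edges_concat, List.concat_eq_append, List.mem_append] at he
      rcases he with he | he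
      · exact hfrp e he
      · rw [List.mem_singleton] at he
        subst he; exact hfrf₂
    have hNcard : N + 1 ≤ Fintype.card V := by
      have := hp'.length_lt
      rw [Walk.length_concat, hlen] at this
      omega
    have := Nat.le_findGreatest hNcard hP'
    omega
  set r := p.dropUntil z hz_in_p with hr
  have hr_path : r.IsPath := hpath.dropUntil hz_in_p
  have hr_edges : r.edges ⊆ p.edges := Walk.edges_dropUntil_subset p hz_in_p
  have hnotin : s(c, z) ∉ r.edges := by
    intro hcin
    have huniq := p2m_end_unique p ((Walk.isPath_def p).mp hpath) s(c, z)
      (hr_edges hcin) s(c, t) hctmem (by simp) (by simp)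
    exact hzt (Sym2.congr_right.mp huniq)
  have hcycle : (Walk.cons hcz r).IsCycle := (Walk.cons_isCycle_iff r hcz).mpr ⟨hr_path, hnotin⟩
  have hfrC : ∀ e ∈ (Walk.cons hcz r).edges, p2mFrac x e := by
    intro e he
    rw [Walk.edges_cons, List.mem_cons] at he
    rcases he with rfl | he
    · exact hfrf₂
    · exact hfrp e (hr_edges he)
  have hclo : ∀ v ∈ (Walk.cons hcz r).support, ∀ z' : V, G.Adj v z' →
      p2mFrac x s(v, z') → s(v, z') ∈ (Walk.cons hcz r).edges := by
    intro v hv z' hadj' hfz'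
    obtain ⟨e₁, e₂, h1, h2, hv1, hv2, hne, -⟩ := p2m_cycle_two_edges _ hcycle hv
    have := (p2m_cycle_local hx hcycle hfrC hv h1 h2 hv1 hv2 hne).2 z' hadj' hfz'
    rcases this with h | h
    · rw [h]; exact h1
    · rw [h]; exact h2
  -- a is on the cycle
  have hc_start : c ∈ (Walk.cons hcz r).support := Walk.start_mem_support _
  have ha_sup : a ∈ (Walk.cons hcz r).support := by
    refine p2m_reach hclo p.reverse ?_ hc_start
    intro e he
    rw [Walk.edges_reverse, List.mem_reverse] at he
    exact hfrp e he
  -- rotate to be based at a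
  set C := (Walk.cons hcz r).rotate a ha_sup with hC
  have hCcyc : C.IsCycle := hcycle.rotate ha_sup
  have hCedges : ∀ {e : Sym2 V}, e ∈ C.edges ↔ e ∈ (Walk.cons hcz r).edges :=
    fun {e} => ((Walk.cons hcz r).rotate_edges a ha_sup).mem_iff
  have hCsup : ∀ {v : V}, v ∈ C.support ↔ v ∈ (Walk.cons hcz r).support := by
    intro v
    rw [p2m_cycle_mem_support_iff C hCcyc, p2m_cycle_mem_support_iff _ hcycle]
    constructor
    · rintro ⟨e, he, hve⟩; exact ⟨e, hCedges.mp he, hve⟩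
    · rintro ⟨e, he, hve⟩; exact ⟨e, hCedges.mpr he, hve⟩
  refine ⟨C, hCcyc, ?_, ?_⟩
  · intro e he; exact hfrC e (hCedges.mp he)
  · intro v hv z' hadj' hfz'
    exact hCedges.mpr (hclo v (hCsup.mp hv) z' hadj' hfz')

lemma p2m_cycle_odd (hx : x ∈ Set.extremePoints ℝ (perfect2MatchingPolytope G))
    {a : V} (C : G.Walk a a) (hcyc : C.IsCycle)
    (hfr : ∀ e ∈ C.edges, p2mFrac x e) : Odd C.length := by
  by_contra hodd
  have heven : Even C.length := Nat.not_odd_iff_even.mp hodd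
  set d : G.edgeSet → ℝ := fun e => p2mAlt C 1 (e : Sym2 V) with hd
  have hd0 : ∀ e, (x e ≤ 0 ∨ 2 ≤ x e) → d e = 0 := by
    intro e he
    by_contra hdne
    obtain ⟨hm, hf1, hf2⟩ := hfr _ (p2mAlt_support C 1 _ hdne)
    have hco : (⟨(e : Sym2 V), hm⟩ : G.edgeSet) = e := Subtype.ext rfl
    rw [hco] at hf1 hf2
    rcases he with he | he <;> linarith
  have hdsum : ∀ u : V, ∑ e : G.edgeSet, (if u ∈ (e : Sym2 V) then d e else 0) = 0 := by
    intro u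
    rw [hd]
    rw [p2mAlt_sum C 1 u]
    rw [heven.neg_one_pow]
    split_ifs <;> ring
  have hzero := p2m_perturb hx d hd0 hdsum
  obtain ⟨b, hab, r, hCeq⟩ := Walk.not_nil_iff.mp hcyc.not_nil
  have hnein : s(a, b) ∉ r.edges := by
    have := (Walk.cons_isCycle_iff r hab).mp (hCeq ▸ hcyc)
    exact this.2
  have hfirst : d ⟨s(a, b), (G.mem_edgeSet).mpr hab⟩ = 1 := by
    rw [hd]
    show p2mAlt C 1 s(a, b) = 1
    rw [hCeq]
    exact p2mAlt_first hab r 1 hnein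
  rw [hzero] at hfirst
  simp at hfirst

lemma p2m_cycle_values (hx : x ∈ Set.extremePoints ℝ (perfect2MatchingPolytope G))
    {a : V} (C : G.Walk a a) (hcyc : C.IsCycle)
    (hfr : ∀ e ∈ C.edges, p2mFrac x e) :
    ∀ e : G.edgeSet, (e : Sym2 V) ∈ C.edges → x e = 1 := by
  classical
  set g : Sym2 V → ℝ := fun z => if h : z ∈ G.edgeSet then x ⟨z, h⟩ else 0 with hg
  have hodd := p2m_cycle_odd hx C hcyc hfr
  have hpair : ∀ (w : V) (e₁ e₂ : Sym2 V), e₁ ∈ C.edges → e₂ ∈ C.edges →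
      w ∈ e₁ → w ∈ e₂ → e₁ ≠ e₂ → g e₁ + g e₂ = 2 := by
    intro w e₁ e₂ h1 h2 hw1 hw2 hne
    have hwsup : w ∈ C.support := p2m_mem_support_of_mem_edges C h1 hw1
    have := (p2m_cycle_local hx hcyc hfr hwsup h1 h2 hw1 hw2 hne).1
      (C.edges_subset_edgeSet h1) (C.edges_subset_edgeSet h2)
    rw [hg]
    simp only [dif_pos (C.edges_subset_edgeSet h1), dif_pos (C.edges_subset_edgeSet h2)]
    exact this
  have hone := p2m_cycle_one C hcyc hodd g hpair
  intro e he
  have := hone _ he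
  rw [hg] at this
  simp only [dif_pos e.2] at this
  simpa using this

/-- the full package for a cycle in the assembly -/
def p2mGood (x : G.edgeSet → ℝ) (A : Σ a : V, G.Walk a a) : Prop :=
  A.2.IsCycle ∧ Odd A.2.length ∧ (∀ e ∈ A.2.edges, p2mFrac x e) ∧
  (∀ v ∈ A.2.support, ∀ z : V, G.Adj v z → p2mFrac x s(v, z) → s(v, z) ∈ A.2.edges) ∧
  (∀ e : G.edgeSet, (e : Sym2 V) ∈ A.2.edges → x e = 1)

lemma p2m_share {a₁ a₂ : V} {C₁ : G.Walk a₁ a₁} {C₂ : G.Walk a₂ a₂}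
    (h₁cyc : C₁.IsCycle) (hfr₁ : ∀ e ∈ C₁.edges, p2mFrac x e)
    (hclo₂ : ∀ v ∈ C₂.support, ∀ z : V, G.Adj v z → p2mFrac x s(v, z) → s(v, z) ∈ C₂.edges)
    {w : V} (hw₁ : w ∈ C₁.support) (hw₂ : w ∈ C₂.support) :
    ∀ v ∈ C₁.support, v ∈ C₂.support := by
  intro v hv
  set C' := C₁.rotate w hw₁ with hC'
  have hC'cyc : C'.IsCycle := h₁cyc.rotate hw₁
  have hC'edges : ∀ {e : Sym2 V}, e ∈ C'.edges ↔ e ∈ C₁.edges :=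
    fun {e} => (C₁.rotate_edges w hw₁).mem_iff
  have hv' : v ∈ C'.support := by
    rw [p2m_cycle_mem_support_iff C' hC'cyc]
    obtain ⟨e, he, hve⟩ := (p2m_cycle_mem_support_iff C₁ h₁cyc v).mp hv
    exact ⟨e, hC'edges.mpr he, hve⟩
  refine p2m_reach hclo₂ (C'.takeUntil v hv') ?_ hw₂
  intro e he
  exact hfr₁ e (hC'edges.mp (C'.edges_takeUntil_subset hv' he))

lemma p2m_assemble (hx : x ∈ Set.extremePoints ℝ (perfect2MatchingPolytope G)) :
    ∀ (n : ℕ) (s : Finset V), s.card ≤ n →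
    (∀ u ∈ s, ∃ e : G.edgeSet, u ∈ (e : Sym2 V) ∧ 0 < x e ∧ x e < 2) →
    ∃ l : List (Σ a : V, G.Walk a a),
      (∀ A ∈ l, p2mGood x A) ∧
      List.Pairwise (fun A B => ∀ v, v ∈ A.2.support → v ∉ B.2.support) l ∧
      (∀ u ∈ s, ∃ A ∈ l, u ∈ A.2.support) ∧
      (∀ A ∈ l, ∃ u ∈ s, u ∈ A.2.support) := by
  intro n
  induction n with
  | zero =>
    intro s hs _
    have : s = ∅ := Finset.card_eq_zero.mp (Nat.le_zero.mp hs)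
    subst this
    exact ⟨[], by simp, by simp, by simp, by simp⟩
  | succ n ih =>
    intro s hs hcovs
    rcases s.eq_empty_or_nonempty with rfl | ⟨u, hu⟩
    · exact ⟨[], by simp, by simp, by simp, by simp⟩
    · obtain ⟨e₀, hue₀, h1, h2⟩ := hcovs u hu
      obtain ⟨C, hCcyc, hCfr, hCclo⟩ := p2m_exists_cycle hx e₀ hue₀ h1 h2
      have hCodd := p2m_cycle_odd hx C hCcyc hCfr
      have hCval := p2m_cycle_values hx C hCcyc hCfr
      have hCgood : p2mGood x ⟨u, C⟩ := ⟨hCcyc, hCodd, hCfr, hCclo, hCval⟩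
      have husup : u ∈ C.support := Walk.start_mem_support _
      set s' := s \ C.support.toFinset with hs'
      have hsub' : s' ⊆ s := Finset.sdiff_subset
      have hcard' : s'.card ≤ n := by
        have hss : s' ⊂ s := by
          refine Finset.ssubset_iff_of_subset hsub' |>.mpr ⟨u, hu, ?_⟩
          rw [hs', Finset.mem_sdiff]
          push_neg
          intro h
          exact List.mem_toFinset.mpr husup
        have := Finset.card_lt_card hss
        omega
      obtain ⟨l', hgood', hpair', hcov', hwit'⟩ := ih s' hcard'
        (fun u' hu' => hcovs u' (hsub' hu'))
      refine ⟨⟨u, C⟩ :: l', ?_, ?_, ?_, ?_⟩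
      · intro A hA
        rcases List.mem_cons.mp hA with rfl | hA
        · exact hCgood
        · exact hgood' A hA
      · refine List.Pairwise.cons ?_ hpair'
        intro B hB v hvC hvB
        obtain ⟨u', hu's', hu'B⟩ := hwit' B hB
        have hBgood := hgood' B hB
        have hall : ∀ w ∈ B.2.support, w ∈ C.support :=
          p2m_share hBgood.1 hBgood.2.2.1 hCclo hvB hvC
        have : u' ∈ C.support := hall u' hu'B
        rw [hs', Finset.mem_sdiff] at hu's'
        exact hu's'.2 (List.mem_toFinset.mpr this)
      · intro u'' hu''
        by_cases hcase : u'' ∈ C.support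
        · exact ⟨⟨u, C⟩, List.mem_cons_self, hcase⟩
        · have : u'' ∈ s' := by
            rw [hs', Finset.mem_sdiff]
            exact ⟨hu'', fun hc => hcase (List.mem_toFinset.mp hc)⟩
          obtain ⟨A, hA, hA2⟩ := hcov' u'' this
          exact ⟨A, List.mem_cons_of_mem _ hA, hA2⟩
      · intro A hA
        rcases List.mem_cons.mp hA with rfl | hA
        · exact ⟨u, hu, husup⟩
        · obtain ⟨u', hu', hu'A⟩ := hwit' A hA
          exact ⟨u', hsub' hu', hu'A⟩
end


theorem perfect2MatchingPolytope_extremePoints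
    {V : Type} [Fintype V] [DecidableEq V] (G : SimpleGraph V) [Fintype G.edgeSet]
    (hcov : ∀ v : V, ∃ u : V, G.Adj v u)
    (x : G.edgeSet → ℝ) :
    x ∈ Set.extremePoints ℝ (perfect2MatchingPolytope G) ↔
      ∃ (M : Set (Sym2 V)) (k : ℕ) (w : Fin k → V)
        (c : ∀ i : Fin k, G.Walk (w i) (w i)),
        -- `M` is a set of edges of `G`
        M ⊆ G.edgeSet ∧
        -- `M` is a matching: distinct edges of `M` share no vertex
        (∀ e ∈ M, ∀ f ∈ M, e ≠ f → ∀ v : V, v ∈ e → v ∉ f) ∧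
        -- the `c i` are odd cycles
        (∀ i, (c i).IsCycle ∧ Odd (c i).length) ∧
        -- the cycles are pairwise vertex-disjoint
        (∀ i j, i ≠ j → ∀ v : V, v ∈ (c i).support → v ∉ (c j).support) ∧
        -- the cycles are vertex-disjoint from the matching
        (∀ i, ∀ v ∈ (c i).support, ∀ e ∈ M, v ∉ e) ∧
        -- together they cover every vertex of `G`
        (∀ v : V, (∃ e ∈ M, v ∈ e) ∨ (∃ i, v ∈ (c i).support)) ∧
        -- and `x` is the corresponding point
        (∀ e : G.edgeSet,
          ((e : Sym2 V) ∈ M → x e = 2) ∧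
          ((∃ i, (e : Sym2 V) ∈ (c i).edges) → x e = 1) ∧
          ((e : Sym2 V) ∉ M → ¬ (∃ i, (e : Sym2 V) ∈ (c i).edges) → x e = 0)) := by
  classical
  constructor
  · -- forward direction
    intro hx
    have hbd := hx.1.1
    have hsum := hx.1.2
    set Vfrac : Finset V := univ.filter
      (fun u => ∃ e : G.edgeSet, u ∈ (e : Sym2 V) ∧ 0 < x e ∧ x e < 2) with hVfrac
    obtain ⟨l, hgood, hpair, hcovl, -⟩ := p2m_assemble hx Vfrac.card Vfrac le_rfl
      (fun u hu => (Finset.mem_filter.mp hu).2)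
    have hlmem : ∀ i : Fin l.length, l.get i ∈ l := fun i => l.get_mem i
    refine ⟨{z : Sym2 V | ∃ h : z ∈ G.edgeSet, x ⟨z, h⟩ = 2}, l.length,
      fun i => (l.get i).1, fun i => (l.get i).2, ?_, ?_, ?_, ?_, ?_, ?_, ?_⟩
    · rintro z ⟨h, -⟩; exact h
    · -- matching
      rintro e ⟨he, hxe⟩ f ⟨hf, hxf⟩ hne v hve hvf
      have key : (4 : ℝ) ≤ 2 := by
        rw [← hsum v]
        have hss : ({⟨e, he⟩, ⟨f, hf⟩} : Finset G.edgeSet) ⊆ univ := Finset.subset_univ _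
        have hne' : (⟨e, he⟩ : G.edgeSet) ≠ ⟨f, hf⟩ := fun hc => hne (congrArg Subtype.val hc)
        have hpairsum : ∑ e' ∈ ({⟨e, he⟩, ⟨f, hf⟩} : Finset G.edgeSet),
            (if v ∈ (e' : Sym2 V) then x e' else 0) = 4 := by
          rw [Finset.sum_pair hne']
          rw [if_pos hve, if_pos hvf]
          show x ⟨e, he⟩ + x ⟨f, hf⟩ = 4
          rw [hxe, hxf]; norm_num
        rw [← hpairsum]
        apply Finset.sum_le_sum_of_subset_of_nonneg hss
        intro e' _ _
        split_ifs with h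
        · exact (hbd e').1
        · exact le_rfl
      linarith
    · intro i
      have := hgood _ (hlmem i)
      exact ⟨this.1, this.2.1⟩
    · -- pairwise disjoint
      intro i j hij v hvi hvj
      rcases lt_trichotomy i j with h | h | h
      · exact (List.pairwise_iff_get.mp hpair i j h) v hvi hvj
      · exact hij h
      · exact (List.pairwise_iff_get.mp hpair j i h) v hvj hvi
    · -- cycles disjoint from matching
      rintro i v hv e ⟨he, hxe⟩ hve
      have hgi := hgood _ (hlmem i)
      obtain ⟨e₁, e₂, h1, h2, hv1, hv2, hne12, -⟩ := p2m_cycle_two_edges _ hgi.1 hv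
      have hm1 : e₁ ∈ G.edgeSet := (l.get i).2.edges_subset_edgeSet h1
      have hm2 : e₂ ∈ G.edgeSet := (l.get i).2.edges_subset_edgeSet h2
      have hx1 : x ⟨e₁, hm1⟩ = 1 := hgi.2.2.2.2 ⟨e₁, hm1⟩ h1
      have hx2 : x ⟨e₂, hm2⟩ = 1 := hgi.2.2.2.2 ⟨e₂, hm2⟩ h2
      have hne01 : (⟨e, he⟩ : G.edgeSet) ≠ ⟨e₁, hm1⟩ := by
        intro hc
        rw [hc] at hxe; rw [hxe] at hx1; norm_num at hx1
      have hne02 : (⟨e, he⟩ : G.edgeSet) ≠ ⟨e₂, hm2⟩ := by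
        intro hc
        rw [hc] at hxe; rw [hxe] at hx2; norm_num at hx2
      have hne' : (⟨e₁, hm1⟩ : G.edgeSet) ≠ ⟨e₂, hm2⟩ := fun hc => hne12 (congrArg Subtype.val hc)
      have key : (4 : ℝ) ≤ 2 := by
        rw [← hsum v]
        have hsub : ({⟨e, he⟩, ⟨e₁, hm1⟩, ⟨e₂, hm2⟩} : Finset G.edgeSet) ⊆ univ :=
          Finset.subset_univ _
        have h3 : ∑ e' ∈ ({⟨e, he⟩, ⟨e₁, hm1⟩, ⟨e₂, hm2⟩} : Finset G.edgeSet),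
            (if v ∈ (e' : Sym2 V) then x e' else 0) = 4 := by
          rw [Finset.sum_insert (by simp [hne01, hne02]), Finset.sum_pair hne']
          rw [if_pos hve, if_pos hv1, if_pos hv2, hxe, hx1, hx2]
          norm_num
        rw [← h3]
        apply Finset.sum_le_sum_of_subset_of_nonneg hsub
        intro e' _ _
        split_ifs with h
        · exact (hbd e').1
        · exact le_rfl
      linarith
    · -- coverage
      intro v
      have hposs : ∃ e : G.edgeSet, v ∈ (e : Sym2 V) ∧ 0 < x e := by
        by_contra hno
        push_neg at hno
        have : ∑ e : G.edgeSet, (if v ∈ (e : Sym2 V) then x e else 0) ≤ 0 := by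
          apply Finset.sum_nonpos
          intro e _
          split_ifs with h
          · exact hno e h
          · exact le_rfl
        rw [hsum v] at this
        linarith
      obtain ⟨e, hve, hpos⟩ := hposs
      rcases lt_or_ge (x e) 2 with hlt | hge
      · -- fractional, covered by a cycle
        right
        have hvV : v ∈ Vfrac := by
          rw [hVfrac, Finset.mem_filter]
          exact ⟨mem_univ _, e, hve, hpos, hlt⟩
        obtain ⟨A, hAl, hvA⟩ := hcovl v hvV
        obtain ⟨i, hi⟩ := List.mem_iff_get.mp hAl
        exact ⟨i, show v ∈ (l.get i).snd.support by rw [hi]; exact hvA⟩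
      · left
        have hx2 : x e = 2 := le_antisymm (hbd e).2 hge
        exact ⟨(e : Sym2 V), ⟨e.2, by simpa using hx2⟩, hve⟩
    · -- values
      intro e
      refine ⟨?_, ?_, ?_⟩
      · rintro ⟨h, hxe⟩
        simpa using hxe
      · rintro ⟨i, hi⟩
        exact (hgood _ (hlmem i)).2.2.2.2 e hi
      · intro hM hC
        rcases (hbd e).1.lt_or_eq with hpos | hzero
        · exfalso
          rcases lt_or_ge (x e) 2 with hlt | hge
          · -- fractional edge: its endpoint is on a cycle, closure puts e on the cycle
            have ha : ((e : Sym2 V).out.1) ∈ (e : Sym2 V) := Sym2.out_fst_mem _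
            set a := ((e : Sym2 V).out.1)
            have haV : a ∈ Vfrac := by
              rw [hVfrac, Finset.mem_filter]
              exact ⟨mem_univ _, e, ha, hpos, hlt⟩
            obtain ⟨A, hAl, hvA⟩ := hcovl a haV
            obtain ⟨z, hz⟩ := Sym2.mem_iff_exists.mp ha
            have hadj : G.Adj a z := G.mem_edgeSet.mp (hz ▸ e.2)
            have hfr : p2mFrac x s(a, z) := hz ▸ ((p2m_frac_coe e).mpr ⟨hpos, hlt⟩)
            have hclo := (hgood A hAl).2.2.2.1 a hvA z hadj hfr
            obtain ⟨i, hi⟩ := List.mem_iff_get.mp hAl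
            apply hC
            refine ⟨i, ?_⟩
            show (e : Sym2 V) ∈ (l.get i).snd.edges
            rw [hi, hz]
            exact hclo
          · exact hM ⟨e.2, by simpa using (le_antisymm (hbd e).2 hge)⟩
        · exact hzero.symm
  · rintro ⟨M, k, w, c, hMsub, hmatch, hcyc, hdisj, hMdisj, hcover, hval⟩
    have hbd : ∀ e : G.edgeSet, 0 ≤ x e ∧ x e ≤ 2 := by
      intro e
      by_cases h1 : (e : Sym2 V) ∈ M
      · rw [(hval e).1 h1]; norm_num
      by_cases h2 : ∃ i, (e : Sym2 V) ∈ (c i).edges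
      · rw [(hval e).2.1 h2]; norm_num
      · rw [(hval e).2.2 h1 h2]; norm_num
    have hoff : ∀ (u : V) (i : Fin k), u ∈ (c i).support →
        ∀ e : G.edgeSet, u ∈ (e : Sym2 V) → (e : Sym2 V) ∉ (c i).edges → x e = 0 := by
      intro u i hu e hue he
      have heM : (e : Sym2 V) ∉ M := fun hM => hMdisj i u hu _ hM hue
      have heC : ¬ ∃ j, (e : Sym2 V) ∈ (c j).edges := by
        rintro ⟨j, hj⟩
        by_cases hij : j = i
        · subst hij; exact he hj
        · exact hdisj i j (fun hc => hij hc.symm) u hu (p2m_mem_support_of_mem_edges _ hj hue)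
      exact (hval e).2.2 heM heC
    have hoffM : ∀ (u : V) (e₀ : Sym2 V), e₀ ∈ M → u ∈ e₀ →
        ∀ e : G.edgeSet, u ∈ (e : Sym2 V) → (e : Sym2 V) ≠ e₀ → x e = 0 := by
      intro u e₀ hM hu e hue hne
      have heM : (e : Sym2 V) ∉ M := fun hMe => hmatch _ hMe _ hM hne u hue hu
      have heC : ¬ ∃ j, (e : Sym2 V) ∈ (c j).edges := by
        rintro ⟨j, hj⟩
        exact hMdisj j u (p2m_mem_support_of_mem_edges _ hj hue) e₀ hM hu
      exact (hval e).2.2 heM heC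
    have hxS : x ∈ perfect2MatchingPolytope G := by
      refine ⟨hbd, ?_⟩
      intro u
      rcases hcover u with ⟨e₀, hM, hu⟩ | ⟨i, hu⟩
      · have he₀ : e₀ ∈ G.edgeSet := hMsub hM
        rw [Finset.sum_eq_single (⟨e₀, he₀⟩ : G.edgeSet)]
        · rw [if_pos hu]
          exact (hval _).1 hM
        · intro e _ hne
          split_ifs with h
          · exact hoffM u e₀ hM hu e h (fun hc => hne (Subtype.ext hc))
          · rfl
        · intro hc; exact absurd (mem_univ _) hc
      · obtain ⟨e₁, e₂, h1, h2, hu1, hu2, hne12, huniq⟩ := p2m_cycle_two_edges _ (hcyc i).1 hu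
        have hm1 := (c i).edges_subset_edgeSet h1
        have hm2 := (c i).edges_subset_edgeSet h2
        have hnesub : (⟨e₁, hm1⟩ : G.edgeSet) ≠ ⟨e₂, hm2⟩ :=
          fun hc => hne12 (congrArg Subtype.val hc)
        have hTsub : ({⟨e₁, hm1⟩, ⟨e₂, hm2⟩} : Finset G.edgeSet) ⊆ univ := Finset.subset_univ _
        have hTzero : ∀ e ∈ (univ : Finset G.edgeSet),
            e ∉ ({⟨e₁, hm1⟩, ⟨e₂, hm2⟩} : Finset G.edgeSet) →
            (if u ∈ (e : Sym2 V) then x e else 0) = 0 := by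
          intro e _ heT
          split_ifs with h
          · refine hoff u i hu e h (fun hin => heT ?_)
            rcases huniq _ hin h with h' | h'
            · exact Finset.mem_insert.mpr (Or.inl (Subtype.ext h'))
            · exact Finset.mem_insert.mpr (Or.inr (Finset.mem_singleton.mpr (Subtype.ext h')))
          · rfl
        rw [← Finset.sum_subset hTsub hTzero, Finset.sum_pair hnesub, if_pos hu1, if_pos hu2,
          (hval _).2.1 ⟨i, h1⟩, (hval _).2.1 ⟨i, h2⟩]
        norm_num
    refine ⟨hxS, ?_⟩
    intro y hy z hz hseg
    obtain ⟨aa, bb, hapos, hbpos, habs, heq⟩ := hseg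
    have heq' : ∀ e : G.edgeSet, aa * y e + bb * z e = x e := by
      intro e
      have := congrFun heq e
      simpa [Pi.add_apply, Pi.smul_apply, smul_eq_mul] using this
    have hagree : ∀ e : G.edgeSet, ¬ (∃ i, (e : Sym2 V) ∈ (c i).edges) → y e = x e := by
      intro e hni
      have he' := heq' e
      have hy0 := (hy.1 e).1
      have hy2 := (hy.1 e).2
      have hz0 := (hz.1 e).1
      have hz2 := (hz.1 e).2
      by_cases hM : (e : Sym2 V) ∈ M
      · have hx2 := (hval e).1 hM
        rw [hx2] at he' ⊢
        have h2le : 2 ≤ y e := by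
          nlinarith [mul_nonneg hbpos.le (sub_nonneg.mpr hz2)]
        linarith
      · have hx0 := (hval e).2.2 hM hni
        rw [hx0] at he' ⊢
        have hle : y e ≤ 0 := by
          nlinarith [mul_nonneg hbpos.le hz0]
        linarith
    have hycyc : ∀ (i : Fin k) (e : G.edgeSet), (e : Sym2 V) ∈ (c i).edges → y e = 1 := by
      intro i
      set g : Sym2 V → ℝ := fun s => if h : s ∈ G.edgeSet then y ⟨s, h⟩ else 0 with hg
      have hpairg : ∀ (w' : V) (e₁ e₂ : Sym2 V), e₁ ∈ (c i).edges → e₂ ∈ (c i).edges →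
          w' ∈ e₁ → w' ∈ e₂ → e₁ ≠ e₂ → g e₁ + g e₂ = 2 := by
        intro w' e₁ e₂ h1 h2 hw1 hw2 hne
        have hwsup : w' ∈ (c i).support := p2m_mem_support_of_mem_edges _ h1 hw1
        obtain ⟨f₁, f₂, hf1, hf2, hwf1, hwf2, hfne, huniq⟩ :=
          p2m_cycle_two_edges _ (hcyc i).1 hwsup
        have hmf1 := (c i).edges_subset_edgeSet hf1
        have hmf2 := (c i).edges_subset_edgeSet hf2
        have hfsub : ({⟨f₁, hmf1⟩, ⟨f₂, hmf2⟩} : Finset G.edgeSet) ⊆ univ := Finset.subset_univ _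
        have hfnesub : (⟨f₁, hmf1⟩ : G.edgeSet) ≠ ⟨f₂, hmf2⟩ :=
          fun hc => hfne (congrArg Subtype.val hc)
        have hzero : ∀ e ∈ (univ : Finset G.edgeSet),
            e ∉ ({⟨f₁, hmf1⟩, ⟨f₂, hmf2⟩} : Finset G.edgeSet) →
            (if w' ∈ (e : Sym2 V) then y e else 0) = 0 := by
          intro e _ heT
          split_ifs with h
          · have hnotc : (e : Sym2 V) ∉ (c i).edges := by
              intro hin
              rcases huniq _ hin h with h' | h'
              · exact heT (Finset.mem_insert.mpr (Or.inl (Subtype.ext h')))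
              · exact heT (Finset.mem_insert.mpr (Or.inr (Finset.mem_singleton.mpr
                  (Subtype.ext h'))))
            have hnj : ¬ ∃ j, (e : Sym2 V) ∈ (c j).edges := by
              rintro ⟨j, hj⟩
              by_cases hij : j = i
              · subst hij; exact hnotc hj
              · exact hdisj i j (fun hc => hij hc.symm) w' hwsup
                  (p2m_mem_support_of_mem_edges _ hj h)
            rw [hagree e hnj]
            exact hoff w' i hwsup e h hnotc
          · rfl
        have hysum := hy.2 w'
        rw [← Finset.sum_subset hfsub hzero, Finset.sum_pair hfnesub,
          if_pos hwf1, if_pos hwf2] at hysum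
        have hgf : g f₁ + g f₂ = 2 := by
          rw [hg]
          simp only [dif_pos hmf1, dif_pos hmf2]
          exact hysum
        exact p2m_pair_eq hgf hne (huniq _ h1 hw1) (huniq _ h2 hw2)
      have hone := p2m_cycle_one _ (hcyc i).1 (hcyc i).2 g hpairg
      intro e he
      have hge := hone _ he
      rw [hg] at hge
      simp only [dif_pos e.2] at hge
      simpa using hge
    have hyx : y = x := by
      funext e
      by_cases hci : ∃ i, (e : Sym2 V) ∈ (c i).edges
      · obtain ⟨i, hi⟩ := hci
        rw [hycyc i e hi, (hval e).2.1 ⟨i, hi⟩]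
      · exact hagree e hci
    exact hyx
end
end

section
/- Let G be a finite graph in which every vertex is incident to at least one edge, and let P2M(G) ⊆ ℝ^{E(G)} be its perfect 2-matching polytope. Every vertex (extreme point) x of P2M(G) has all coordinates in {0, 1, 2}; that is, P2M(G) is a half-integral polytope (after scaling by 1/2). -/
/-!
The perfect 2-matching polytope is half-integral (after scaling by 1/2):
every extreme point has all its coordinates in `{0, 1, 2}`.
-/

open Finset

lemma perturb_eq_zero {V : Type} [Fintype V] [DecidableEq V]
    (G : SimpleGraph V) [Fintype G.edgeSet] (x : G.edgeSet → ℝ)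
    (hx : x ∈ Set.extremePoints ℝ (perfect2MatchingPolytope G))
    (d : G.edgeSet → ℝ) (hd : ∀ e, d e ≠ 0 → 0 < x e ∧ x e < 2)
    (hker : ∀ u : V, ∑ e : G.edgeSet, (if u ∈ (e : Sym2 V) then d e else 0) = 0) :
    d = 0 := by
  classical
  by_contra hne
  obtain ⟨e1, he1⟩ : ∃ e, d e ≠ 0 := Function.ne_iff.1 hne
  have : Nonempty G.edgeSet := ⟨e1⟩
  have hU : (univ : Finset G.edgeSet).Nonempty := univ_nonempty
  set c : G.edgeSet → ℝ := fun e =>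
    if d e = 0 then 1 else min (x e) (2 - x e) / |d e| with hc
  set ε : ℝ := univ.inf' hU c with hε
  have hcpos : ∀ e, 0 < c e := by
    intro e
    rw [hc]
    by_cases h : d e = 0
    · simp [h]
    · have := hd e h
      simp only [h, if_neg, if_false]
      exact div_pos (lt_min (this.1) (by linarith)) (abs_pos.2 h)
  have hεpos : 0 < ε := by
    rw [hε, Finset.lt_inf'_iff]
    exact fun e _ => hcpos e
  have hbound : ∀ e, d e ≠ 0 → |ε * d e| ≤ min (x e) (2 - x e) := by
    intro e he
    have h1 : ε ≤ c e := Finset.inf'_le _ (mem_univ e)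
    rw [hc] at h1
    simp only [he, if_neg, if_false] at h1
    have := (le_div_iff₀ (abs_pos.2 he)).1 h1
    rw [abs_mul, abs_of_pos hεpos]
    linarith
  have hxP := hx.1
  obtain ⟨hb, hs⟩ := hxP
  have hmem : ∀ (σ : ℝ), |σ| = 1 → (fun e => x e + σ * (ε * d e)) ∈ perfect2MatchingPolytope G := by
    intro σ hσ
    constructor
    · intro e
      by_cases h : d e = 0
      · simpa [h] using hb e
      · have h2 := hbound e h
        have h3 : |σ * (ε * d e)| ≤ min (x e) (2 - x e) := by
          rw [abs_mul, hσ, one_mul]; exact h2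
        have h4 := abs_le.1 h3
        have h5 : min (x e) (2 - x e) ≤ x e := min_le_left _ _
        have h6 : min (x e) (2 - x e) ≤ 2 - x e := min_le_right _ _
        constructor
        · show 0 ≤ x e + σ * (ε * d e); linarith [h4.1]
        · show x e + σ * (ε * d e) ≤ 2; linarith [h4.2]
    · intro u
      have : ∀ e : G.edgeSet,
          (if u ∈ (e : Sym2 V) then x e + σ * (ε * d e) else 0)
          = (if u ∈ (e : Sym2 V) then x e else 0)
            + σ * ε * (if u ∈ (e : Sym2 V) then d e else 0) := by
        intro e; split <;> ring
      rw [Finset.sum_congr rfl (fun e _ => this e), Finset.sum_add_distrib,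
        ← Finset.mul_sum, hker u, hs u, mul_zero, add_zero]
  have hy := hmem 1 (by norm_num)
  have hz := hmem (-1) (by norm_num)
  have hseg : x ∈ openSegment ℝ (fun e => x e + 1 * (ε * d e))
      (fun e => x e + (-1) * (ε * d e)) := by
    refine ⟨1/2, 1/2, by norm_num, by norm_num, by norm_num, ?_⟩
    funext e
    simp only [Pi.add_apply, Pi.smul_apply, smul_eq_mul]
    ring
  have := (hx.2 hy hz hseg)
  have h0 := congrFun this e1
  have h0 : x e1 + 1 * (ε * d e1) = x e1 := h0
  have : ε * d e1 = 0 := by linarith [h0]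
  rcases mul_eq_zero.1 this with h | h
  · exact absurd h (ne_of_gt hεpos)
  · exact he1 h

section Aux
variable {V : Type} [Fintype V] [DecidableEq V] (G : SimpleGraph V) [Fintype G.edgeSet]

lemma card_endpoints (e : G.edgeSet) :
    (univ.filter (fun u => u ∈ (e : Sym2 V))).card = 2 := by
  classical
  obtain ⟨s, hs⟩ := e
  induction s using Sym2.ind with
  | _ a b =>
    have hab : G.Adj a b := hs
    have h1 : (univ.filter (fun u => u ∈ (s(a, b) : Sym2 V))) = {a, b} := by
      ext u; simp [Sym2.mem_iff]
    rw [h1, Finset.card_pair hab.ne]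

end Aux

theorem perfect2MatchingPolytope_extremePoints_halfIntegral
    {V : Type} [Fintype V] [DecidableEq V] (G : SimpleGraph V) [Fintype G.edgeSet]
    (hcov : ∀ v : V, ∃ u : V, G.Adj v u)
    (x : G.edgeSet → ℝ)
    (hx : x ∈ Set.extremePoints ℝ (perfect2MatchingPolytope G)) :
    ∀ e : G.edgeSet, x e = 0 ∨ x e = 1 ∨ x e = 2 := by
  classical
  by_contra hcon
  push_neg at hcon
  obtain ⟨e0, h00, h01, h02⟩ := hcon
  obtain ⟨hb, hsum⟩ := hx.1
  have he0 : 0 < x e0 ∧ x e0 < 2 :=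
    ⟨lt_of_le_of_ne (hb e0).1 (Ne.symm h00), lt_of_le_of_ne (hb e0).2 h02⟩
  set Hs : Finset G.edgeSet := univ.filter (fun e => 0 < x e ∧ x e < 2) with hHs
  set S : Finset V := univ.filter (fun u => ∃ e ∈ Hs, u ∈ (e : Sym2 V)) with hSdef
  set inc : V → Finset G.edgeSet := fun u => Hs.filter (fun e : G.edgeSet => u ∈ (e : Sym2 V)) with hincdef
  have hHmem : ∀ e, e ∈ Hs ↔ (0 < x e ∧ x e < 2) := by intro e; simp [hHs]
  have he0H : e0 ∈ Hs := (hHmem e0).2 he0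
  have hnotH : ∀ e, e ∉ Hs → x e = 0 ∨ x e = 2 := by
    intro e he
    rw [hHmem] at he
    push_neg at he
    rcases lt_or_ge 0 (x e) with h | h
    · exact Or.inr (le_antisymm (hb e).2 (he h))
    · exact Or.inl (le_antisymm h (hb e).1)
  have hmemS : ∀ u : V, u ∈ S ↔ ∃ e ∈ Hs, u ∈ (e : Sym2 V) := by intro u; simp [hSdef]
  have hmeminc : ∀ (u : V) (e : G.edgeSet), e ∈ inc u ↔ e ∈ Hs ∧ u ∈ (e : Sym2 V) := by
    intro u e; simp [hincdef]
  -- splitting the degree-2 constraint at each vertex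
  have hsplit : ∀ u : V,
      ∑ e ∈ inc u, x e
        + ∑ e ∈ (univ.filter (fun e : G.edgeSet => u ∈ (e : Sym2 V))).filter (fun e => e ∉ Hs), x e = 2 := by
    intro u
    have h1 : ∑ e ∈ univ.filter (fun e : G.edgeSet => u ∈ (e : Sym2 V)), x e = 2 := by
      rw [Finset.sum_filter]; exact hsum u
    have h2 : (univ.filter (fun e : G.edgeSet => u ∈ (e : Sym2 V))).filter (fun e => e ∈ Hs) = inc u := by
      ext e; simp [hincdef, and_comm]
    rw [← h1, ← Finset.sum_filter_add_sum_filter_not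
      (univ.filter (fun e : G.edgeSet => u ∈ (e : Sym2 V))) (fun e => e ∈ Hs) x, h2]
  -- the sum over the fractional edges at a touched vertex is exactly 2
  have hinc2 : ∀ u ∈ S, ∑ e ∈ inc u, x e = 2 := by
    intro u hu
    obtain ⟨e, heH, heu⟩ := (hmemS u).1 hu
    have hne : (inc u).Nonempty := ⟨e, (hmeminc u e).2 ⟨heH, heu⟩⟩
    have hpos : 0 < ∑ e ∈ inc u, x e := by
      apply Finset.sum_pos _ hne
      intro f hf
      exact ((hHmem f).1 ((hmeminc u f).1 hf).1).1
    set T := (univ.filter (fun e : G.edgeSet => u ∈ (e : Sym2 V))).filter (fun e => e ∉ Hs) with hT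
    have hT02 : ∀ f ∈ T, x f = 0 ∨ x f = 2 := by
      intro f hf
      exact hnotH f (Finset.mem_filter.1 hf).2
    have hdich : ∑ f ∈ T, x f = 0 ∨ 2 ≤ ∑ f ∈ T, x f := by
      by_cases hall : ∀ f ∈ T, x f = 0
      · exact Or.inl (Finset.sum_eq_zero hall)
      · push_neg at hall
        obtain ⟨f, hfT, hfne⟩ := hall
        have hf2 : x f = 2 := (hT02 f hfT).resolve_left hfne
        refine Or.inr ?_
        calc (2 : ℝ) = x f := hf2.symm
          _ ≤ ∑ f ∈ T, x f := Finset.single_le_sum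
              (fun g hg => by rcases hT02 g hg with h | h <;> rw [h] <;> norm_num) hfT
    have := hsplit u
    rcases hdich with h | h
    · linarith
    · linarith
  -- every touched vertex meets at least two fractional edges
  have hdegge : ∀ u ∈ S, 2 ≤ (inc u).card := by
    intro u hu
    by_contra hlt
    push_neg at hlt
    interval_cases h : (inc u).card
    · obtain ⟨e, heH, heu⟩ := (hmemS u).1 hu
      have : e ∈ inc u := (hmeminc u e).2 ⟨heH, heu⟩
      rw [Finset.card_eq_zero] at h
      simp [h] at this
    · obtain ⟨e, he⟩ := Finset.card_eq_one.1 h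
      have h2 := hinc2 u hu
      rw [he, Finset.sum_singleton] at h2
      have heH : e ∈ Hs := ((hmeminc u e).1 (by simp [he])).1
      have := ((hHmem e).1 heH).2
      linarith
  -- handshake
  have hhand : ∑ u ∈ S, (inc u).card = 2 * Hs.card := by
    have h1 : ∑ u : V, (inc u).card = ∑ u ∈ S, (inc u).card := by
      symm
      apply Finset.sum_subset (Finset.subset_univ S)
      intro u _ hu
      rw [Finset.card_eq_zero]
      ext e
      simp only [Finset.notMem_empty, iff_false]
      intro he
      exact hu ((hmemS u).2 ⟨e, ((hmeminc u e).1 he).1, ((hmeminc u e).1 he).2⟩)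
    have h2 : ∑ u : V, (inc u).card = ∑ e ∈ Hs, (univ.filter (fun u => u ∈ (e : Sym2 V))).card := by
      simp only [hincdef, Finset.card_filter]
      rw [Finset.sum_comm]
    rw [← h1, h2]
    rw [Finset.sum_congr rfl (fun e _ => card_endpoints G e), Finset.sum_const, smul_eq_mul,
      mul_comm]
  -- the incidence linear map
  set ψ : (↥Hs → ℝ) →ₗ[ℝ] (↥S → ℝ) :=
    { toFun := fun f u => ∑ e : ↥Hs, if (u : V) ∈ ((e : G.edgeSet) : Sym2 V) then f e else 0
      map_add' := by
        intro f g
        funext u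
        simp only [Pi.add_apply]
        rw [← Finset.sum_add_distrib]
        exact Finset.sum_congr rfl (fun e _ => by split <;> simp)
      map_smul' := by
        intro c f
        funext u
        simp only [RingHom.id_apply, Pi.smul_apply, smul_eq_mul, Finset.mul_sum]
        exact Finset.sum_congr rfl (fun e _ => by split <;> simp) } with hψ
  have hψapp : ∀ (f : ↥Hs → ℝ) (u : ↥S),
      ψ f u = ∑ e : ↥Hs, if (u : V) ∈ ((e : G.edgeSet) : Sym2 V) then f e else 0 := by
    intro f u; rfl
  by_cases hinj : Function.Injective ψ
  · -- injective case: all fractional values are 1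
    have hcard1 : Hs.card ≤ S.card := by
      have h := LinearMap.finrank_le_finrank_of_injective hinj
      rwa [Module.finrank_fintype_fun_eq_card, Module.finrank_fintype_fun_eq_card,
        Fintype.card_coe, Fintype.card_coe] at h
    have hcard2 : 2 * S.card ≤ 2 * Hs.card := by
      rw [← hhand]
      calc 2 * S.card = ∑ _u ∈ S, 2 := by rw [Finset.sum_const, smul_eq_mul, mul_comm]
        _ ≤ ∑ u ∈ S, (inc u).card := Finset.sum_le_sum hdegge
    have hcardeq : S.card = Hs.card := le_antisymm (by omega) hcard1
    have hdeg2 : ∀ u ∈ S, (inc u).card = 2 := by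
      have hsumeq : ∑ _u ∈ S, 2 = ∑ u ∈ S, (inc u).card := by
        rw [hhand, Finset.sum_const, smul_eq_mul, mul_comm, hcardeq]
      intro u hu
      exact ((Finset.sum_eq_sum_iff_of_le hdegge).1 hsumeq u hu).symm
    set y : ↥Hs → ℝ := fun e => x e - 1 with hy
    have hψy : ψ y = 0 := by
      funext u
      rw [hψapp]
      have h1 : ∑ e : ↥Hs, (if (u : V) ∈ ((e : G.edgeSet) : Sym2 V) then y e else 0)
          = ∑ e ∈ Hs, (if (u : V) ∈ (e : Sym2 V) then x e - 1 else 0) := by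
        rw [← Finset.sum_coe_sort Hs (fun e => if (u : V) ∈ (e : Sym2 V) then x e - 1 else 0)]
      have hincf : inc (u : V) = Hs.filter (fun e : G.edgeSet => (u : V) ∈ (e : Sym2 V)) := rfl
      have h2 : ∑ e ∈ inc (u : V), (x e - 1)
          = ∑ e ∈ Hs, (if (u : V) ∈ (e : Sym2 V) then x e - 1 else 0) := by
        rw [hincf]
        exact Finset.sum_filter _ _
      rw [h1, ← h2, Finset.sum_sub_distrib, hinc2 u u.2, Finset.sum_const, nsmul_eq_mul, mul_one,
        hdeg2 u u.2]
      norm_num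
    have hy0 : y = 0 := hinj (by rw [hψy, map_zero])
    have := congrFun hy0 ⟨e0, he0H⟩
    simp [hy] at this
    exact h01 (by linarith)
  · -- non-injective case: obtain a perturbation direction, contradict extremality
    obtain ⟨f, g, hfg, hne⟩ := Function.not_injective_iff.1 hinj
    set d0 : ↥Hs → ℝ := f - g with hd0def
    have hd0ne : d0 ≠ 0 := sub_ne_zero.2 hne
    have hψd0 : ψ d0 = 0 := by rw [hd0def, map_sub, hfg, sub_self]
    set d : G.edgeSet → ℝ := fun e => if h : e ∈ Hs then d0 ⟨e, h⟩ else 0 with hd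
    have hdsupp : ∀ e, d e ≠ 0 → 0 < x e ∧ x e < 2 := by
      intro e he
      rw [hd] at he
      by_cases h : e ∈ Hs
      · exact (hHmem e).1 h
      · simp [h] at he
    have hker : ∀ u : V, ∑ e : G.edgeSet, (if u ∈ (e : Sym2 V) then d e else 0) = 0 := by
      intro u
      by_cases hu : u ∈ S
      · have h1 : ∑ e : G.edgeSet, (if u ∈ (e : Sym2 V) then d e else 0)
            = ∑ e ∈ Hs, (if u ∈ (e : Sym2 V) then d e else 0) := by
          symm
          apply Finset.sum_subset (Finset.subset_univ Hs)
          intro e _ heH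
          rw [hd]
          simp [heH]
        have h2 : ∑ e ∈ Hs, (if u ∈ (e : Sym2 V) then d e else 0)
            = ∑ e : ↥Hs, (if u ∈ ((e : G.edgeSet) : Sym2 V) then d0 e else 0) := by
          rw [← Finset.sum_coe_sort Hs (fun e => if u ∈ (e : Sym2 V) then d e else 0)]
          apply Finset.sum_congr rfl
          intro e _
          congr 1
          rw [hd]
          simp [e.2]
        have h3 := congrFun hψd0 ⟨u, hu⟩
        rw [hψapp] at h3
        rw [h1, h2]
        exact h3
      · apply Finset.sum_eq_zero
        intro e _
        by_cases heu : u ∈ (e : Sym2 V)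
        · have heH : e ∉ Hs := fun h => hu ((hmemS u).2 ⟨e, h, heu⟩)
          rw [hd]
          simp [heH]
        · simp [heu]
    have hdzero : d = 0 := perturb_eq_zero G x hx d hdsupp hker
    obtain ⟨e1, he1⟩ := Function.ne_iff.1 hd0ne
    apply he1
    have h4 : d ↑e1 = d0 e1 := by rw [hd]; simp [e1.2]
    rw [hdzero] at h4
    exact h4.symm
end

section
/- Let G be a finite bipartite graph and let P_PM(G) ⊆ ℝ^{E(G)} be defined by the inequalities 0 ≤ x_e ≤ 1 for all e ∈ E(G) and the equalities ∑_{e incident to u} x_e = 1 for all u ∈ V(G). The vertices (extreme points) of P_PM(G) are exactly the indicator vectors of perfect matchings of G; in particular, the number of vertices of P_PM(G) equals the number of perfect matchings of G. -/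
/-!
For a finite bipartite graph `G`, the polytope defined by `0 ≤ x_e ≤ 1` and
`∑_{e ∋ u} x_e = 1` (for all vertices `u`) has as its extreme points exactly the
indicator vectors of perfect matchings of `G`; in particular the number of its
vertices equals the number of perfect matchings of `G`.
-/

open Finset

/-- The polytope `P_PM(G)` in `ℝ^{E(G)}`: `0 ≤ x_e ≤ 1` for every edge,
and `∑_{e ∋ u} x_e = 1` for every vertex `u`. -/
def perfectMatchingPolytope {V : Type} [Fintype V] [DecidableEq V]
    (G : SimpleGraph V) [Fintype G.edgeSet] : Set (G.edgeSet → ℝ) :=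
  {x | (∀ e : G.edgeSet, 0 ≤ x e ∧ x e ≤ 1) ∧
       (∀ u : V, ∑ e : G.edgeSet, (if u ∈ (e : Sym2 V) then x e else 0) = 1)}

/-- `M` is a perfect matching of `G`: a set of pairwise disjoint edges covering
every vertex. -/
def IsPerfectMatchingSet {V : Type} (G : SimpleGraph V) (M : Set (Sym2 V)) : Prop :=
  M ⊆ G.edgeSet ∧
  (∀ e ∈ M, ∀ f ∈ M, e ≠ f → ∀ v : V, v ∈ e → v ∉ f) ∧
  (∀ v : V, ∃ e ∈ M, v ∈ e)

/-- The indicator vector in `ℝ^{E(G)}` of a set `M` of edges. -/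
noncomputable def edgeIndicator {V : Type} (G : SimpleGraph V) (M : Set (Sym2 V)) :
    G.edgeSet → ℝ :=
  Set.indicator {e : G.edgeSet | (e : Sym2 V) ∈ M} (fun _ => 1)

lemma sum_int_of_01 {ι : Type*} (T : Finset ι) (g : ι → ℝ)
    (h : ∀ i ∈ T, g i = 0 ∨ g i = 1) : ∃ m : ℕ, ∑ i ∈ T, g i = m := by
  classical
  refine ⟨(T.filter (fun i => g i = 1)).card, ?_⟩
  rw [← Finset.sum_boole]
  refine Finset.sum_congr rfl fun i hi => ?_
  rcases h i hi with h0 | h1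
  · have : ¬ (g i = 1) := by rw [h0]; norm_num
    simp [h0, this]
  · simp [h1]

lemma exists_second_frac {V : Type} [Fintype V] [DecidableEq V]
    (G : SimpleGraph V) [Fintype G.edgeSet]
    {x : G.edgeSet → ℝ} (hx : x ∈ perfectMatchingPolytope G)
    {u : V} {e₀ : G.edgeSet} (hu : u ∈ (e₀ : Sym2 V))
    (hf : 0 < x e₀ ∧ x e₀ < 1) :
    ∃ e₁ : G.edgeSet, u ∈ (e₁ : Sym2 V) ∧ e₁ ≠ e₀ ∧ 0 < x e₁ ∧ x e₁ < 1 := by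
  classical
  obtain ⟨hb, hs⟩ := hx
  by_contra hcon
  push_neg at hcon
  have hsum := hs u
  rw [← Finset.sum_filter] at hsum
  set S : Finset G.edgeSet := Finset.univ.filter (fun e => u ∈ (e : Sym2 V)) with hS
  have he₀S : e₀ ∈ S := by simp [hS, hu]
  rw [← Finset.sum_erase_add S x he₀S] at hsum
  obtain ⟨m, hm⟩ := sum_int_of_01 (S.erase e₀) x (by
    intro e he
    have hne : e ≠ e₀ := Finset.ne_of_mem_erase he
    have hue : u ∈ (e : Sym2 V) := by
      have := Finset.mem_of_mem_erase he
      simp [hS] at this; exact this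
    rcases lt_or_ge 0 (x e) with h0 | h0
    · rcases lt_or_ge (x e) 1 with h1 | h1
      · exact absurd h1 (not_lt.mpr (hcon e hue hne h0))
      · exact Or.inr (le_antisymm (hb e).2 h1)
    · exact Or.inl (le_antisymm h0 (hb e).1)
  )
  rw [hm] at hsum
  have h1 : (m : ℝ) < 1 := by linarith [hf.1]
  have h2 : (0 : ℝ) < m := by linarith [hf.2]
  have h1' : m < 1 := by exact_mod_cast h1
  have h2' : 0 < m := by exact_mod_cast h2
  omega

lemma edgeIndicator_apply {V : Type} (G : SimpleGraph V) (M : Set (Sym2 V))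
    (e : G.edgeSet) [Decidable ((e : Sym2 V) ∈ M)] :
    edgeIndicator G M e = if (e : Sym2 V) ∈ M then 1 else 0 := by
  unfold edgeIndicator
  rw [Set.indicator_apply]
  congr 1

lemma indicator_mem_polytope {V : Type} [Fintype V] [DecidableEq V]
    (G : SimpleGraph V) [Fintype G.edgeSet]
    {M : Set (Sym2 V)} (hM : IsPerfectMatchingSet G M) :
    edgeIndicator G M ∈ perfectMatchingPolytope G := by
  classical
  obtain ⟨hsub, hdisj, hcov⟩ := hM
  constructor
  · intro e
    by_cases h : (e : Sym2 V) ∈ M <;> simp [edgeIndicator_apply, h]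
  · intro u
    obtain ⟨f, hfM, huf⟩ := hcov u
    have hfE : f ∈ G.edgeSet := hsub hfM
    rw [Finset.sum_eq_single (⟨f, hfE⟩ : G.edgeSet)]
    · simp [huf, edgeIndicator_apply, hfM]
    · intro e _ hne
      by_cases hue : u ∈ (e : Sym2 V)
      · have heM : (e : Sym2 V) ∉ M := fun heM =>
          hdisj _ heM _ hfM (fun h => hne (Subtype.ext h)) u hue huf
        simp [hue, edgeIndicator_apply, heM]
      · simp [hue]
    · intro h; exact absurd (Finset.mem_univ _) h

lemma mem01_extreme {V : Type} [Fintype V] [DecidableEq V]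
    (G : SimpleGraph V) [Fintype G.edgeSet]
    {x : G.edgeSet → ℝ} (hx : x ∈ perfectMatchingPolytope G)
    (h01 : ∀ e, x e = 0 ∨ x e = 1) :
    x ∈ Set.extremePoints ℝ (perfectMatchingPolytope G) := by
  refine ⟨hx, fun y hy z hz hseg => ?_⟩
  obtain ⟨a, b, ha, hb, hab, hxy⟩ := hseg
  have key : ∀ e, y e = x e ∧ z e = x e := by
    intro e
    have h1 : a * y e + b * z e = x e := by
      have := congrFun hxy e
      simpa [Pi.add_apply, Pi.smul_apply, smul_eq_mul] using this
    have hy0 := (hy.1 e).1; have hy1 := (hy.1 e).2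
    have hz0 := (hz.1 e).1; have hz1 := (hz.1 e).2
    rcases h01 e with h | h <;> rw [h] at h1 <;> constructor <;> rw [h] <;> nlinarith
  exact funext fun e => (key e).1

lemma exists_pm_of_01 {V : Type} [Fintype V] [DecidableEq V]
    (G : SimpleGraph V) [Fintype G.edgeSet]
    {x : G.edgeSet → ℝ} (hx : x ∈ perfectMatchingPolytope G)
    (h01 : ∀ e, x e = 0 ∨ x e = 1) :
    ∃ M : Set (Sym2 V), IsPerfectMatchingSet G M ∧ x = edgeIndicator G M := by
  classical
  obtain ⟨hb, hs⟩ := hx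
  refine ⟨{s | ∃ h : s ∈ G.edgeSet, x ⟨s, h⟩ = 1}, ⟨?_, ?_, ?_⟩, ?_⟩
  · rintro s ⟨h, -⟩; exact h
  · rintro e ⟨he, hxe⟩ f ⟨hf, hxf⟩ hne v hve hvf
    have hne' : (⟨e, he⟩ : G.edgeSet) ≠ ⟨f, hf⟩ := fun h => hne (congrArg Subtype.val h)
    have h2 : (2 : ℝ) ≤ ∑ e' : G.edgeSet, (if v ∈ (e' : Sym2 V) then x e' else 0) := by
      calc (2:ℝ) = (if v ∈ ((⟨e,he⟩ : G.edgeSet) : Sym2 V) then x ⟨e,he⟩ else 0)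
            + (if v ∈ ((⟨f,hf⟩ : G.edgeSet) : Sym2 V) then x ⟨f,hf⟩ else 0) := by
              simp [hve, hvf, hxe, hxf]; norm_num
        _ = ∑ e' ∈ ({⟨e,he⟩, ⟨f,hf⟩} : Finset G.edgeSet),
              (if v ∈ (e' : Sym2 V) then x e' else 0) := (Finset.sum_pair (f := fun e' : G.edgeSet => if v ∈ (e' : Sym2 V) then x e' else 0) hne').symm
        _ ≤ ∑ e' : G.edgeSet, (if v ∈ (e' : Sym2 V) then x e' else 0) := by
              apply Finset.sum_le_sum_of_subset_of_nonneg (Finset.subset_univ _)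
              intro i _ _
              split
              · exact (hb i).1
              · exact le_refl 0
    linarith [hs v]
  · intro v
    have hsv := hs v
    have : ∃ e : G.edgeSet, (if v ∈ (e : Sym2 V) then x e else 0) ≠ 0 := by
      by_contra hc
      push_neg at hc
      rw [Finset.sum_eq_zero (fun e _ => hc e)] at hsv
      norm_num at hsv
    obtain ⟨e, he⟩ := this
    have hve : v ∈ (e : Sym2 V) := by by_contra h; simp [h] at he
    have hxe : x e ≠ 0 := by simpa [hve] using he
    have hxe1 : x e = 1 := (h01 e).resolve_left hxe
    exact ⟨e, ⟨e.2, by rwa [Subtype.coe_eta]⟩, hve⟩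
  · funext e
    rw [edgeIndicator_apply]
    rcases h01 e with h | h
    · rw [h]
      have : ¬ ∃ hh : (e : Sym2 V) ∈ G.edgeSet, x ⟨(e : Sym2 V), hh⟩ = 1 := by
        rintro ⟨hh, h1⟩
        rw [Subtype.coe_eta] at h1
        rw [h] at h1; norm_num at h1
      simp only [Set.mem_setOf_eq]
      rw [if_neg this]
    · rw [h]
      have : ∃ hh : (e : Sym2 V) ∈ G.edgeSet, x ⟨(e : Sym2 V), hh⟩ = 1 :=
        ⟨e.2, by rwa [Subtype.coe_eta]⟩
      simp only [Set.mem_setOf_eq]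
      rw [if_pos this]

-- From a fractional edge, build an infinite non-backtracking fractional walk.
lemma exists_frac_walk {V : Type} [Fintype V] [DecidableEq V]
    (G : SimpleGraph V) [Fintype G.edgeSet]
    {x : G.edgeSet → ℝ} (hx : x ∈ perfectMatchingPolytope G)
    {e₀ : G.edgeSet} (hf : 0 < x e₀ ∧ x e₀ < 1) :
    ∃ v : ℕ → V,
      (∀ k, ∃ h : s(v k, v (k+1)) ∈ G.edgeSet,
        0 < x ⟨s(v k, v (k+1)), h⟩ ∧ x ⟨s(v k, v (k+1)), h⟩ < 1) ∧
      (∀ k, v (k+2) ≠ v k) := by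
  classical
  set D := {p : V × V // ∃ h : s(p.1, p.2) ∈ G.edgeSet,
    0 < x ⟨s(p.1, p.2), h⟩ ∧ x ⟨s(p.1, p.2), h⟩ < 1} with hD
  have hstep : ∀ d : D, ∃ d' : D, d'.1.1 = d.1.2 ∧ d'.1.2 ≠ d.1.1 := by
    rintro ⟨⟨a, b⟩, he, hf1, hf2⟩
    have hu : b ∈ (( ⟨s(a,b), he⟩ : G.edgeSet) : Sym2 V) := Sym2.mem_mk_right a b
    obtain ⟨e₁, hue, hne, hfr⟩ := exists_second_frac G hx hu ⟨hf1, hf2⟩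
    obtain ⟨w, hw⟩ := Sym2.mem_iff_exists.mp hue
    have hmem : s(b, w) ∈ G.edgeSet := hw ▸ e₁.2
    have he₁ : e₁ = ⟨s(b, w), hmem⟩ := Subtype.ext hw
    refine ⟨⟨(b, w), ⟨hmem, by rw [← he₁]; exact hfr⟩⟩, rfl, ?_⟩
    intro hwa
    have hwa' : w = a := hwa
    apply hne
    apply Subtype.ext
    rw [hw, hwa']
    exact Sym2.eq_swap
  choose step h1 h2 using hstep
  obtain ⟨a₀, b₀, hab₀⟩ : ∃ a b, (e₀ : Sym2 V) = s(a, b) := by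
    induction (e₀ : Sym2 V) using Sym2.ind with
    | _ a b => exact ⟨a, b, rfl⟩
  have hd₀mem : s(a₀, b₀) ∈ G.edgeSet := hab₀ ▸ e₀.2
  have he₀' : e₀ = ⟨s(a₀, b₀), hd₀mem⟩ := Subtype.ext hab₀
  have d₀ : D := ⟨(a₀, b₀), hd₀mem, by rw [← he₀']; exact hf⟩
  set seq : ℕ → D := fun k => step^[k] d₀ with hseq
  have hseqsucc : ∀ k, seq (k+1) = step (seq k) := fun k =>
    Function.iterate_succ_apply' step k d₀
  set v : ℕ → V := fun k => (seq k).1.1 with hv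
  have hv1 : ∀ k, v (k+1) = (seq k).1.2 := by
    intro k; show (seq (k+1)).1.1 = _; rw [hseqsucc]; exact h1 _
  refine ⟨v, ?_, ?_⟩
  · intro k
    have := (seq k).2
    rw [← hv1 k] at this
    exact this
  · intro k
    have h := h2 (seq k)
    rw [← hseqsucc, ← hv1 (k+1)] at h
    exact h

lemma fin2_ne {a b : Fin 2} (h : a ≠ b) : b = a + 1 := by revert h; revert a b; decide

open Fin.NatCast in
lemma extreme_01 {V : Type} [Fintype V] [DecidableEq V]
    (G : SimpleGraph V) [Fintype G.edgeSet] (hbip : G.Colorable 2)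
    {x : G.edgeSet → ℝ} (hx : x ∈ Set.extremePoints ℝ (perfectMatchingPolytope G)) :
    ∀ e, x e = 0 ∨ x e = 1 := by
  classical
  by_contra hc
  push_neg at hc
  obtain ⟨e₀, he0, he1⟩ := hc
  have hxP := hx.1
  have hb := hxP.1
  have hf : 0 < x e₀ ∧ x e₀ < 1 :=
    ⟨lt_of_le_of_ne (hb e₀).1 (Ne.symm he0), lt_of_le_of_ne (hb e₀).2 he1⟩
  obtain ⟨v, hvadj, hvnb⟩ := exists_frac_walk G hxP hf
  obtain ⟨s₁, t₁, hst, hvst⟩ := Finite.exists_ne_map_eq_of_infinite v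
  have hP : ∃ m, 0 < m ∧ ∃ a, v (a + m) = v a := by
    rcases lt_or_gt_of_ne hst with h | h
    · exact ⟨t₁ - s₁, by omega, s₁, by rw [Nat.add_sub_cancel' h.le]; exact hvst.symm⟩
    · exact ⟨s₁ - t₁, by omega, t₁, by rw [Nat.add_sub_cancel' h.le]; exact hvst⟩
  set n := Nat.find hP with hn
  obtain ⟨hnpos, a₀, hcl⟩ := Nat.find_spec hP
  set w : ℕ → V := fun k => v (a₀ + k) with hwdef
  have hwcl : w n = w 0 := by simpa [hwdef] using hcl
  have hwadj : ∀ k, ∃ h : s(w k, w (k+1)) ∈ G.edgeSet,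
      0 < x ⟨s(w k, w (k+1)), h⟩ ∧ x ⟨s(w k, w (k+1)), h⟩ < 1 := by
    intro k
    have h := hvadj (a₀ + k)
    have hh : a₀ + k + 1 = a₀ + (k + 1) := by omega
    rw [hh] at h
    exact h
  have hwinj : ∀ s t : ℕ, s < t → t < n → w s ≠ w t := by
    intro s t h1 h2 heq
    have hPst : 0 < t - s ∧ ∃ a, v (a + (t - s)) = v a :=
      ⟨by omega, a₀ + s, by
        have h3 : a₀ + s + (t - s) = a₀ + t := by omega
        rw [h3]; exact heq.symm⟩
    exact Nat.find_min hP (by omega) hPst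
  have hwAdj : ∀ k, G.Adj (w k) (w (k+1)) := fun k =>
    (SimpleGraph.mem_edgeSet G).mp (hwadj k).choose
  have hne01 : ∀ k, w k ≠ w (k+1) := fun k => (hwAdj k).ne
  have hn1 : n ≠ 1 := by
    intro h
    apply hne01 0
    have h1 : w 1 = w 0 := by rw [← h]; exact hwcl
    exact h1.symm
  have hn2 : n ≠ 2 := by
    intro h
    apply hvnb a₀
    have h2 : w 2 = w 0 := by rw [← h]; exact hwcl
    simpa [hwdef] using h2
  have hn3 : 3 ≤ n := by omega
  -- evenness via 2-coloring
  obtain ⟨c⟩ := hbip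
  have hcol : ∀ k, c (w (k+1)) = c (w k) + 1 := fun k => fin2_ne (c.valid (hwAdj k))
  have hckn : ∀ k : ℕ, c (w k) = c (w 0) + (k : Fin 2) := by
    intro k
    induction k with
    | zero => simp
    | succ k ih => rw [hcol k, ih]; push_cast; rw [add_assoc]
  have hn_even : Even n := by
    have h0 := hckn n
    rw [hwcl] at h0
    have hzero : ((n : ℕ) : Fin 2) = 0 := left_eq_add.mp h0
    have hmod : n % 2 = 0 := by
      have := congrArg Fin.val hzero
      rwa [Fin.val_natCast] at this
    exact Nat.even_iff.mpr hmod
  -- the cycle edges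
  set E : ℕ → G.edgeSet := fun k => ⟨s(w k, w (k+1)), (hwadj k).choose⟩ with hE
  have hEfrac : ∀ k, 0 < x (E k) ∧ x (E k) < 1 := fun k => (hwadj k).choose_spec
  have hEcoe : ∀ k, (E k : Sym2 V) = s(w k, w (k+1)) := fun k => rfl
  have key : ∀ s t : ℕ, s < t → t < n → E s ≠ E t := by
    intro s t hlt htn hEq
    have hsn : s < n := lt_trans hlt htn
    have hco : s(w s, w (s+1)) = s(w t, w (t+1)) := congrArg Subtype.val hEq
    rcases Sym2.eq_iff.mp hco with ⟨h1, h2⟩ | ⟨h1, h2⟩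
    · exact hwinj s t hlt htn h1
    · rcases Nat.lt_or_ge (t+1) n with h | h
      · exact hwinj s (t+1) (by omega) h h1
      · have htn1 : t + 1 = n := by omega
        have hws0 : w s = w 0 := by rw [h1, htn1, hwcl]
        have hs0 : s = 0 := by
          by_contra hs0
          exact hwinj 0 s (by omega) (by omega) hws0.symm
        have h1t : (1:ℕ) < t := by omega
        exact hwinj 1 t h1t htn (by rw [← h2, hs0])
  have hEdist : ∀ s t : ℕ, s < n → t < n → E s = E t → s = t := by
    intro s t hsn htn hEq
    rcases lt_trichotomy s t with h|h|h
    · exact absurd hEq (key s t h htn)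
    · exact h
    · exact absurd hEq.symm (key t s h hsn)
  -- epsilon
  have hn0 : (Finset.range n).Nonempty := ⟨0, Finset.mem_range.mpr (by omega)⟩
  set ε : ℝ := (Finset.range n).inf' hn0 (fun k => min (x (E k)) (1 - x (E k))) with hεdef
  have hεpos : 0 < ε := by
    rw [hεdef, Finset.lt_inf'_iff]
    intro k _
    exact lt_min (hEfrac k).1 (by linarith [(hEfrac k).2])
  have hεle : ∀ k ∈ Finset.range n, ε ≤ min (x (E k)) (1 - x (E k)) :=
    fun k hk => Finset.inf'_le _ hk
  -- the perturbation
  set δ : G.edgeSet → ℝ :=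
    fun e => ∑ k ∈ Finset.range n, if e = E k then (-1:ℝ)^k * ε else 0 with hδdef
  have hδE : ∀ t, t < n → δ (E t) = (-1:ℝ)^t * ε := by
    intro t htn
    simp only [hδdef]
    rw [Finset.sum_eq_single t]
    · simp
    · intro k hk hkt
      rw [if_neg]
      intro h
      exact hkt (hEdist t k htn (Finset.mem_range.mp hk) h).symm
    · intro h; exact absurd (Finset.mem_range.mpr htn) h
  have hδcases : ∀ e, δ e = 0 ∨ ∃ k, k < n ∧ e = E k := by
    intro e
    by_cases h : ∃ k, k < n ∧ e = E k
    · exact Or.inr h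
    · push_neg at h
      refine Or.inl ?_
      simp only [hδdef]
      apply Finset.sum_eq_zero
      intro k hk
      rw [if_neg (h k (Finset.mem_range.mp hk))]
  have hδbnd : ∀ e, (0 ≤ x e + δ e ∧ x e + δ e ≤ 1) ∧ (0 ≤ x e - δ e ∧ x e - δ e ≤ 1) := by
    intro e
    rcases hδcases e with h | ⟨k, hkn, rfl⟩
    · rw [h]
      constructor <;> constructor <;> simp [(hb e).1, (hb e).2]
    · have h1 := hδE k hkn
      have h2 := hεle k (Finset.mem_range.mpr hkn)
      have h4 : ε ≤ x (E k) := le_trans h2 (min_le_left _ _)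
      have h5 : ε ≤ 1 - x (E k) := le_trans h2 (min_le_right _ _)
      have h3 : |δ (E k)| = ε := by
        rw [h1, abs_mul, abs_pow, abs_neg, abs_one, one_pow, one_mul, abs_of_pos hεpos]
      obtain ⟨hl, hr⟩ := abs_le.mp h3.le
      exact ⟨⟨by linarith, by linarith⟩, ⟨by linarith, by linarith⟩⟩
  -- vertex sums of the perturbation vanish
  have hδsum : ∀ u : V, ∑ e : G.edgeSet, (if u ∈ (e : Sym2 V) then δ e else 0) = 0 := by
    intro u
    set g : ℕ → ℝ := fun j => if u = w j then (-1:ℝ)^j * ε else 0 with hg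
    have hsh : (∑ k ∈ Finset.range n, g (k+1)) = ∑ k ∈ Finset.range n, g k := by
      have h1 := Finset.sum_range_succ g n
      have h2 := Finset.sum_range_succ' g n
      have hgn : g n = g 0 := by
        simp only [hg]
        rw [hwcl, pow_zero, Even.neg_one_pow hn_even]
      linarith
    calc ∑ e : G.edgeSet, (if u ∈ (e:Sym2 V) then δ e else 0)
        = ∑ e : G.edgeSet, ∑ k ∈ Finset.range n,
            (if u ∈ (e:Sym2 V) then (if e = E k then (-1:ℝ)^k*ε else 0) else 0) := by
          refine Finset.sum_congr rfl (fun e _ => ?_)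
          split_ifs with h
          · simp only [hδdef]
          · exact (Finset.sum_eq_zero (fun k _ => rfl)).symm
      _ = ∑ k ∈ Finset.range n, ∑ e : G.edgeSet,
            (if u ∈ (e:Sym2 V) then (if e = E k then (-1:ℝ)^k*ε else 0) else 0) :=
          Finset.sum_comm
      _ = ∑ k ∈ Finset.range n, (if u ∈ (E k : Sym2 V) then (-1:ℝ)^k*ε else 0) := by
          refine Finset.sum_congr rfl (fun k _ => ?_)
          rw [Finset.sum_eq_single (E k)]
          · simp
          · intro e _ hne
            by_cases h1 : u ∈ (e : Sym2 V)
            · rw [if_pos h1, if_neg hne]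
            · rw [if_neg h1]
          · intro h; exact absurd (Finset.mem_univ _) h
      _ = ∑ k ∈ Finset.range n, (g k - g (k+1)) := by
          refine Finset.sum_congr rfl (fun k _ => ?_)
          have hmem : (u ∈ (E k : Sym2 V)) ↔ (u = w k ∨ u = w (k+1)) := by
            rw [hEcoe k]; exact Sym2.mem_iff
          have hnekk : w k ≠ w (k+1) := hne01 k
          have hp : (-1:ℝ)^(k+1) = -((-1:ℝ)^k) := by rw [pow_succ]; ring
          simp only [hg]
          by_cases h1 : u = w k
          · have h2 : ¬ u = w (k+1) := by rw [h1]; exact hnekk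
            simp [hmem, h1, h2, hnekk, Ne.symm hnekk, hEcoe k]
          · by_cases h2 : u = w (k+1)
            · simp [hmem, h1, h2, hp, hnekk, Ne.symm hnekk, hEcoe k]
            · simp [hmem, h1, h2]
      _ = 0 := by rw [Finset.sum_sub_distrib, hsh, sub_self]
  -- the two perturbed points
  set y : G.edgeSet → ℝ := fun e => x e + δ e with hy
  set z : G.edgeSet → ℝ := fun e => x e - δ e with hz
  have hyP : y ∈ perfectMatchingPolytope G := by
    constructor
    · intro e; exact (hδbnd e).1
    · intro u
      have hsplit : ∀ e : G.edgeSet, (if u ∈ (e:Sym2 V) then y e else 0)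
          = (if u ∈ (e:Sym2 V) then x e else 0) + (if u ∈ (e:Sym2 V) then δ e else 0) := by
        intro e
        simp only [hy]
        split_ifs <;> simp
      rw [Finset.sum_congr rfl (fun e _ => hsplit e), Finset.sum_add_distrib,
        hxP.2 u, hδsum u, add_zero]
  have hzP : z ∈ perfectMatchingPolytope G := by
    constructor
    · intro e; exact (hδbnd e).2
    · intro u
      have hsplit : ∀ e : G.edgeSet, (if u ∈ (e:Sym2 V) then z e else 0)
          = (if u ∈ (e:Sym2 V) then x e else 0) - (if u ∈ (e:Sym2 V) then δ e else 0) := by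
        intro e
        simp only [hz]
        split_ifs <;> simp
      rw [Finset.sum_congr rfl (fun e _ => hsplit e), Finset.sum_sub_distrib,
        hxP.2 u, hδsum u, sub_zero]
  have hseg : x ∈ openSegment ℝ y z := by
    refine ⟨1/2, 1/2, by norm_num, by norm_num, by norm_num, ?_⟩
    funext e
    simp only [Pi.add_apply, Pi.smul_apply, smul_eq_mul, hy, hz]
    ring
  have hfix := hx.2 hyP hzP hseg
  have h0 : y (E 0) = x (E 0) := congrFun hfix (E 0)
  have h0' : x (E 0) + δ (E 0) = x (E 0) := h0
  have hδ0 : δ (E 0) = ε := by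
    have := hδE 0 (by omega)
    simpa using this
  linarith

theorem perfectMatchingPolytope_extremePoints
    {V : Type} [Fintype V] [DecidableEq V] (G : SimpleGraph V) [Fintype G.edgeSet]
    (hbip : G.Colorable 2) :
    Set.extremePoints ℝ (perfectMatchingPolytope G) =
      {x | ∃ M : Set (Sym2 V), IsPerfectMatchingSet G M ∧ x = edgeIndicator G M} ∧
    (Set.extremePoints ℝ (perfectMatchingPolytope G)).ncard =
      {M : Set (Sym2 V) | IsPerfectMatchingSet G M}.ncard := by
  classical
  have main : Set.extremePoints ℝ (perfectMatchingPolytope G) =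
      {x | ∃ M : Set (Sym2 V), IsPerfectMatchingSet G M ∧ x = edgeIndicator G M} := by
    ext x
    constructor
    · intro hx
      exact exists_pm_of_01 G hx.1 (extreme_01 G hbip hx)
    · rintro ⟨M, hM, rfl⟩
      have hmem := indicator_mem_polytope G hM
      apply mem01_extreme G hmem
      intro e
      by_cases h : (e : Sym2 V) ∈ M
      · right; simp [edgeIndicator_apply, h]
      · left; simp [edgeIndicator_apply, h]
  refine ⟨main, ?_⟩
  rw [main]
  have himg : {x : G.edgeSet → ℝ | ∃ M, IsPerfectMatchingSet G M ∧ x = edgeIndicator G M}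
      = edgeIndicator G '' {M | IsPerfectMatchingSet G M} :=
    Set.ext fun x => ⟨fun ⟨M, h1, h2⟩ => ⟨M, h1, h2.symm⟩, fun ⟨M, h1, h2⟩ => ⟨M, h1, h2.symm⟩⟩
  rw [himg]
  apply Set.ncard_image_of_injOn
  intro M hM M' hM' hEq
  have key : ∀ (A B : Set (Sym2 V)), IsPerfectMatchingSet G A →
      edgeIndicator G A = edgeIndicator G B → A ⊆ B := by
    intro A B hA h s hs
    have hsE : s ∈ G.edgeSet := hA.1 hs
    have h1 : edgeIndicator G A ⟨s, hsE⟩ = 1 := by simp [edgeIndicator_apply, hs]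
    have h2 : edgeIndicator G B ⟨s, hsE⟩ = 1 := by rw [← h]; exact h1
    by_contra hnB
    rw [edgeIndicator_apply] at h2
    rw [if_neg hnB] at h2
    norm_num at h2
  exact Set.Subset.antisymm (key M M' hM hEq) (key M' M hM' hEq.symm)
end

section
/- Let G be a finite bipartite graph and let P ⊆ ℝ^{E(G)} be defined by the inequalities x_e ≥ 0 for all e ∈ E(G) and ∑_{e incident to u} x_e ≤ 1 for all u ∈ V(G). The vertices (extreme points) of P are exactly the indicator vectors of matchings of G (including the empty matching). -/
/-!
For a finite bipartite graph `G`, the polytope defined by `x_e ≥ 0` for all edges and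
`∑_{e ∋ u} x_e ≤ 1` for all vertices has as its extreme points exactly the indicator
vectors of matchings of `G` (including the empty matching).
-/

open Finset

/-- The matching polytope of `G` in `ℝ^{E(G)}`: `x_e ≥ 0` for every edge,
and `∑_{e ∋ u} x_e ≤ 1` for every vertex `u`. -/
def matchingPolytope {V : Type} [Fintype V] [DecidableEq V]
    (G : SimpleGraph V) [Fintype G.edgeSet] : Set (G.edgeSet → ℝ) :=
  {x | (∀ e : G.edgeSet, 0 ≤ x e) ∧
       (∀ u : V, ∑ e : G.edgeSet, (if u ∈ (e : Sym2 V) then x e else 0) ≤ 1)}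

/-- `M` is a matching of `G`: a set of pairwise disjoint edges. -/
def IsMatchingSet {V : Type} (G : SimpleGraph V) (M : Set (Sym2 V)) : Prop :=
  M ⊆ G.edgeSet ∧ (∀ e ∈ M, ∀ f ∈ M, e ≠ f → ∀ v : V, v ∈ e → v ∉ f)

set_option linter.unusedSectionVars false

section Aux
variable {V : Type} [Fintype V] [DecidableEq V] {G : SimpleGraph V} [Fintype G.edgeSet]

/-- sum of x over edges containing u -/
noncomputable def sumAt (G : SimpleGraph V) [Fintype G.edgeSet] [DecidableEq V]
    (x : G.edgeSet → ℝ) (u : V) : ℝ :=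
  ∑ e : G.edgeSet, if u ∈ (e : Sym2 V) then x e else 0

lemma mem_mp_iff {x : G.edgeSet → ℝ} :
    x ∈ matchingPolytope G ↔ (∀ e, 0 ≤ x e) ∧ (∀ u : V, sumAt G x u ≤ 1) := Iff.rfl

lemma sumAt_add_smul (x d : G.edgeSet → ℝ) (c : ℝ) (u : V) :
    sumAt G (x + c • d) u = sumAt G x u + c * sumAt G d u := by
  simp only [sumAt, Finset.mul_sum, ← Finset.sum_add_distrib]
  refine Finset.sum_congr rfl fun e _ => ?_
  by_cases h : u ∈ (e : Sym2 V) <;> simp [h]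

lemma exists_rep (e : G.edgeSet) :
    ∃ a b : V, a ≠ b ∧ G.Adj a b ∧ (e : Sym2 V) = s(a, b) := by
  obtain ⟨z, hz⟩ := e
  induction z using Sym2.ind with
  | _ a b => exact ⟨a, b, (G.mem_edgeSet.mp hz).ne, G.mem_edgeSet.mp hz, rfl⟩

lemma term_le_sumAt {x : G.edgeSet → ℝ} (hx : ∀ e, 0 ≤ x e) {u : V} {e : G.edgeSet}
    (he : u ∈ (e : Sym2 V)) : x e ≤ sumAt G x u := by
  have := Finset.single_le_sum (f := fun f : G.edgeSet => if u ∈ (f : Sym2 V) then x f else 0)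
    (fun f _ => by by_cases h : u ∈ (f : Sym2 V) <;> simp [h, hx f]) (Finset.mem_univ e)
  simpa [he, sumAt] using this

lemma pair_le_sumAt {x : G.edgeSet → ℝ} (hx : ∀ e, 0 ≤ x e) {u : V} {e f : G.edgeSet}
    (he : u ∈ (e : Sym2 V)) (hf : u ∈ (f : Sym2 V)) (hef : e ≠ f) :
    x e + x f ≤ sumAt G x u := by
  have hsub : ({e, f} : Finset G.edgeSet) ⊆ Finset.univ := Finset.subset_univ _
  have := Finset.sum_le_sum_of_subset_of_nonneg hsub
    (f := fun g : G.edgeSet => if u ∈ (g : Sym2 V) then x g else 0)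
    (fun g _ _ => by by_cases h : u ∈ (g : Sym2 V) <;> simp [h, hx g])
  rw [Finset.sum_pair hef] at this
  simpa [he, hf, sumAt] using this

lemma le_one_of_mem {x : G.edgeSet → ℝ} (hx : ∀ e, 0 ≤ x e)
    (hsum : ∀ u : V, sumAt G x u ≤ 1) (e : G.edgeSet) : x e ≤ 1 := by
  obtain ⟨a, b, -, -, hab⟩ := exists_rep e
  have ha : a ∈ (e : Sym2 V) := by rw [hab]; exact Sym2.mem_mk_left a b
  exact (term_le_sumAt hx ha).trans (hsum a)

/-- easy direction: indicators of matchings are extreme points -/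
lemma indicator_extreme {M : Set (Sym2 V)} (hM : IsMatchingSet G M) :
    edgeIndicator G M ∈ Set.extremePoints ℝ (matchingPolytope G) := by
  classical
  set x := edgeIndicator G M with hxdef
  have hx01 : ∀ e : G.edgeSet, x e = 0 ∨ x e = 1 := by
    intro e
    by_cases h : (e : Sym2 V) ∈ M
    · right; simp [hxdef, edgeIndicator, Set.indicator_apply, h]
    · left; simp [hxdef, edgeIndicator, Set.indicator_apply, h]
  have hx0 : ∀ e, 0 ≤ x e := fun e => by rcases hx01 e with h | h <;> simp [h]
  have hxP : x ∈ matchingPolytope G := by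
    refine ⟨hx0, fun u => ?_⟩
    have hterm : ∀ e : G.edgeSet, (if u ∈ (e : Sym2 V) then x e else 0)
        = if u ∈ (e : Sym2 V) ∧ (e : Sym2 V) ∈ M then (1 : ℝ) else 0 := by
      intro e
      by_cases h1 : u ∈ (e : Sym2 V) <;> by_cases h2 : (e : Sym2 V) ∈ M <;>
        simp [hxdef, edgeIndicator, h1, h2, Set.indicator_of_mem, Set.indicator_of_notMem]
    calc (∑ e : G.edgeSet, if u ∈ (e : Sym2 V) then x e else 0)
        = ∑ e : G.edgeSet, if u ∈ (e : Sym2 V) ∧ (e : Sym2 V) ∈ M then (1:ℝ) else 0 :=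
          Finset.sum_congr rfl fun e _ => hterm e
      _ = ((Finset.univ.filter
            (fun e : G.edgeSet => u ∈ (e : Sym2 V) ∧ (e : Sym2 V) ∈ M)).card : ℝ) := by
          rw [Finset.sum_boole]
      _ ≤ 1 := by
          have : (Finset.univ.filter
              (fun e : G.edgeSet => u ∈ (e : Sym2 V) ∧ (e : Sym2 V) ∈ M)).card ≤ 1 := by
            apply Finset.card_le_one.mpr
            intro a ha b hb
            simp only [Finset.mem_filter] at ha hb
            by_contra hab
            have hne : (a : Sym2 V) ≠ (b : Sym2 V) := fun h => hab (Subtype.ext h)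
            exact hM.2 _ ha.2.2 _ hb.2.2 hne u ha.2.1 hb.2.1
          exact_mod_cast this
  refine ⟨hxP, fun y hy z hz hseg => ?_⟩
  obtain ⟨a, b, ha, hb, hab, hsum⟩ := hseg
  have hy1 : ∀ e, y e ≤ 1 := le_one_of_mem hy.1 hy.2
  have hz1 : ∀ e, z e ≤ 1 := le_one_of_mem hz.1 hz.2
  have hkey : ∀ e, y e = x e ∧ z e = x e := by
    intro e
    have hcomb : a * y e + b * z e = x e := by
      have := congrFun hsum e
      simpa using this
    rcases hx01 e with h | h
    · rw [h] at hcomb ⊢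
      have h1 : a * y e = 0 := by
        nlinarith [mul_nonneg ha.le (hy.1 e), mul_nonneg hb.le (hz.1 e)]
      have h2 : b * z e = 0 := by linarith
      constructor
      · exact (mul_eq_zero.mp h1).resolve_left (ne_of_gt ha)
      · exact (mul_eq_zero.mp h2).resolve_left (ne_of_gt hb)
    · rw [h] at hcomb ⊢
      constructor
      · by_contra hne
        have : y e < 1 := lt_of_le_of_ne (hy1 e) hne
        nlinarith [mul_le_mul_of_nonneg_left (hz1 e) hb.le]
      · by_contra hne
        have : z e < 1 := lt_of_le_of_ne (hz1 e) hne
        nlinarith [mul_le_mul_of_nonneg_left (hy1 e) ha.le]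
  exact funext fun e => (hkey e).1

/-- perturbation lemma -/
lemma not_extreme_of_direction {x d : G.edgeSet → ℝ} (hx : x ∈ matchingPolytope G)
    (hd : d ≠ 0) (h1 : ∀ e, d e ≠ 0 → 0 < x e)
    (h2 : ∀ u : V, sumAt G d u ≠ 0 → sumAt G x u < 1) :
    x ∉ Set.extremePoints ℝ (matchingPolytope G) := by
  classical
  intro hext
  have main : ∀ c : ℝ, ∀ᶠ ε in nhdsWithin (0:ℝ) (Set.Ioi 0),
      (x + (c * ε) • d) ∈ matchingPolytope G := by
    intro c
    have hA : ∀ᶠ ε in nhdsWithin (0:ℝ) (Set.Ioi 0),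
        ∀ e : G.edgeSet, 0 ≤ (x + (c * ε) • d) e := by
      rw [Filter.eventually_all]
      intro e
      by_cases hde : d e = 0
      · filter_upwards with ε
        simp [hde, hx.1 e]
      · have hxe := h1 e hde
        have hcont : Filter.Tendsto (fun ε : ℝ => x e + (c * ε) * d e)
            (nhdsWithin (0:ℝ) (Set.Ioi 0)) (nhds (x e)) := by
          have h0 : Filter.Tendsto (fun ε : ℝ => x e + (c * ε) * d e)
              (nhds 0) (nhds (x e + (c * 0) * d e)) := by
            exact ((continuous_const.add ((continuous_const.mul continuous_id).mul
              continuous_const)).tendsto 0)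
          simpa using h0.mono_left nhdsWithin_le_nhds
        filter_upwards [hcont.eventually (eventually_gt_nhds hxe)] with ε hε
        simp only [Pi.add_apply, Pi.smul_apply, smul_eq_mul]
        linarith
    have hB : ∀ᶠ ε in nhdsWithin (0:ℝ) (Set.Ioi 0),
        ∀ u : V, sumAt G (x + (c * ε) • d) u ≤ 1 := by
      rw [Filter.eventually_all]
      intro u
      by_cases hdu : sumAt G d u = 0
      · filter_upwards with ε
        rw [show ((c * ε) • d : G.edgeSet → ℝ) = (c * ε) • d from rfl, sumAt_add_smul, hdu]
        simpa [sumAt] using hx.2 u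
      · have hxu := h2 u hdu
        have hcont : Filter.Tendsto (fun ε : ℝ => sumAt G x u + (c * ε) * sumAt G d u)
            (nhdsWithin (0:ℝ) (Set.Ioi 0)) (nhds (sumAt G x u)) := by
          have h0 : Filter.Tendsto (fun ε : ℝ => sumAt G x u + (c * ε) * sumAt G d u)
              (nhds 0) (nhds (sumAt G x u + (c * 0) * sumAt G d u)) := by
            exact ((continuous_const.add ((continuous_const.mul continuous_id).mul
              continuous_const)).tendsto 0)
          simpa using h0.mono_left nhdsWithin_le_nhds
        filter_upwards [hcont.eventually (eventually_lt_nhds hxu)] with ε hε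
        rw [sumAt_add_smul]
        linarith
    filter_upwards [hA, hB] with ε hA' hB'
    exact ⟨hA', hB'⟩
  obtain ⟨ε, ⟨hp, hm⟩, hε⟩ :=
    (((main 1).and (main (-1))).and (eventually_mem_nhdsWithin (s := Set.Ioi (0:ℝ)))).exists
  have hε0 : (0:ℝ) < ε := hε
  have hseg : x ∈ openSegment ℝ (x + (1 * ε) • d) (x + (-1 * ε) • d) := by
    refine ⟨1/2, 1/2, by norm_num, by norm_num, by norm_num, ?_⟩
    funext e
    simp only [Pi.add_apply, Pi.smul_apply, smul_eq_mul]
    ring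
  have heq := hext.2 hp hm hseg
  rcases smul_eq_zero.mp (add_eq_left.mp heq) with h | h
  · simp at h; linarith
  · exact hd h

/-- key combinatorial/linear algebra step: a fractional point admits a perturbation direction -/
lemma exists_direction (hbip : G.Colorable 2) {x : G.edgeSet → ℝ}
    (hx : x ∈ matchingPolytope G) (hfrac : ∃ e₀ : G.edgeSet, 0 < x e₀ ∧ x e₀ < 1) :
    ∃ d : G.edgeSet → ℝ, d ≠ 0 ∧ (∀ e, d e ≠ 0 → 0 < x e ∧ x e < 1) ∧
      (∀ u : V, sumAt G x u = 1 → sumAt G d u = 0) := by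
  classical
  obtain ⟨C⟩ := hbip
  obtain ⟨hx0, hxsum⟩ := mem_mp_iff.mp hx
  set Frac : Finset G.edgeSet := Finset.univ.filter (fun e => 0 < x e ∧ x e < 1) with hFrac
  set Tight : Finset V := Finset.univ.filter
    (fun u => sumAt G x u = 1 ∧ ∃ e ∈ Frac, u ∈ (e : Sym2 V)) with hTight
  -- every tight vertex on a fractional edge meets at least two fractional edges
  have hdeg : ∀ u ∈ Tight, 2 ≤ (Frac.filter (fun e : G.edgeSet => u ∈ (e : Sym2 V))).card := by
    intro u hu
    rw [hTight, Finset.mem_filter] at hu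
    obtain ⟨-, htight, e, heF, heu⟩ := hu
    by_contra hlt
    push_neg at hlt
    have hcard : (Frac.filter (fun e : G.edgeSet => u ∈ (e : Sym2 V))).card ≤ 1 := by omega
    have hmem : e ∈ Frac.filter (fun e : G.edgeSet => u ∈ (e : Sym2 V)) := Finset.mem_filter.mpr ⟨heF, heu⟩
    have hsingle : ∀ f ∈ Frac.filter (fun e : G.edgeSet => u ∈ (e : Sym2 V)), f = e := by
      intro f hf
      exact Finset.card_le_one.mp hcard f hf e hmem
    have heFrac : 0 < x e ∧ x e < 1 := by
      rw [hFrac, Finset.mem_filter] at heF; exact heF.2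
    have hzero : ∀ f : G.edgeSet, u ∈ (f : Sym2 V) → f ≠ e → x f = 0 := by
      intro f hfu hfe
      by_contra hne
      have hfpos : 0 < x f := lt_of_le_of_ne (hx0 f) (Ne.symm hne)
      have hflt : x f < 1 := by
        by_contra hge
        push_neg at hge
        have hpair := pair_le_sumAt hx0 heu hfu (fun h => hfe h.symm)
        have := hxsum u
        linarith [heFrac.1]
      have hfFrac : f ∈ Frac := by
        rw [hFrac, Finset.mem_filter]
        exact ⟨Finset.mem_univ f, hfpos, hflt⟩
      have hfF : f ∈ Frac.filter (fun e : G.edgeSet => u ∈ (e : Sym2 V)) :=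
        Finset.mem_filter.mpr ⟨hfFrac, hfu⟩
      exact hfe (hsingle f hfF)
    have hsum : sumAt G x u = x e := by
      rw [sumAt]
      have hcong : (∑ f : G.edgeSet, if u ∈ (f : Sym2 V) then x f else 0)
          = ∑ f : G.edgeSet, if f = e then x e else 0 := by
        refine Finset.sum_congr rfl fun f _ => ?_
        by_cases hfe : f = e
        · subst hfe; simp [heu]
        · by_cases hfu : u ∈ (f : Sym2 V)
          · simp [hfu, hfe, hzero f hfu hfe]
          · simp [hfu, hfe]
      rw [hcong]
      simp
    rw [hsum] at htight
    linarith [heFrac.2]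
  obtain ⟨e₀, he₀pos, he₀lt⟩ := hfrac
  have he₀F : e₀ ∈ Frac := by
    rw [hFrac, Finset.mem_filter]; exact ⟨Finset.mem_univ _, he₀pos, he₀lt⟩
  -- the incidence linear map from fractional edges to tight vertices
  let φ : ({e // e ∈ Frac} → ℝ) →ₗ[ℝ] ({u // u ∈ Tight} → ℝ) :=
    { toFun := fun dl u => ∑ e : {e // e ∈ Frac},
        if (u : V) ∈ ((e : G.edgeSet) : Sym2 V) then dl e else 0
      map_add' := by
        intro a b; funext u
        simp only [Pi.add_apply]
        rw [← Finset.sum_add_distrib]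
        exact Finset.sum_congr rfl fun e _ => by split <;> simp
      map_smul' := by
        intro c a; funext u
        simp only [Pi.smul_apply, smul_eq_mul, RingHom.id_apply]
        rw [Finset.mul_sum]
        exact Finset.sum_congr rfl fun e _ => by split <;> simp }
  have hexistsdl : ∃ dl : {e // e ∈ Frac} → ℝ, dl ≠ 0 ∧ φ dl = 0 := by
    by_contra hno
    push_neg at hno
    have hinj : Function.Injective φ := by
      rw [← LinearMap.ker_eq_bot, Submodule.eq_bot_iff]
      intro dl hdl
      by_contra hne
      exact hno dl hne (LinearMap.mem_ker.mp hdl)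
    have hcard1 : Fintype.card {e // e ∈ Frac} ≤ Fintype.card {u // u ∈ Tight} := by
      have h := LinearMap.finrank_le_finrank_of_injective hinj
      rwa [Module.finrank_fintype_fun_eq_card, Module.finrank_fintype_fun_eq_card] at h
    have hcardα : Fintype.card {e // e ∈ Frac} = Frac.card := Fintype.card_coe _
    have hcardβ : Fintype.card {u // u ∈ Tight} = Tight.card := Fintype.card_coe _
    -- double counting
    have hcount : ∑ u ∈ Tight, (Frac.filter (fun e : G.edgeSet => u ∈ (e : Sym2 V))).card
        = ∑ e ∈ Frac, (Tight.filter (fun u : V => u ∈ (e : Sym2 V))).card := by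
      simp only [Finset.card_filter]
      exact Finset.sum_comm
    have hle2 : ∀ e ∈ Frac, (Tight.filter (fun u : V => u ∈ (e : Sym2 V))).card ≤ 2 := by
      intro e _
      obtain ⟨a, b, hab, -, hrep⟩ := exists_rep e
      have hsub : Tight.filter (fun u : V => u ∈ (e : Sym2 V)) ⊆ {a, b} := by
        intro u hu
        rw [Finset.mem_filter, hrep, Sym2.mem_iff] at hu
        simpa using hu.2
      exact (Finset.card_le_card hsub).trans
        ((Finset.card_insert_le a {b}).trans (by simp))
    have hge : 2 * Tight.card ≤ ∑ u ∈ Tight, (Frac.filter (fun e : G.edgeSet => u ∈ (e : Sym2 V))).card := by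
      have := Finset.card_nsmul_le_sum Tight
        (fun u => (Frac.filter (fun e : G.edgeSet => u ∈ (e : Sym2 V))).card) 2 hdeg
      simpa [mul_comm] using this
    have hle : ∑ e ∈ Frac, (Tight.filter (fun u : V => u ∈ (e : Sym2 V))).card ≤ 2 * Frac.card := by
      have := Finset.sum_le_card_nsmul Frac
        (fun e => (Tight.filter (fun u : V => u ∈ (e : Sym2 V))).card) 2 hle2
      simpa [mul_comm] using this
    have hall2 : ∀ e ∈ Frac, (Tight.filter (fun u : V => u ∈ (e : Sym2 V))).card = 2 := by
      by_contra hne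
      push_neg at hne
      obtain ⟨f₀, hf₀, hne₀⟩ := hne
      have hlt : ∑ e ∈ Frac, (Tight.filter (fun u : V => u ∈ (e : Sym2 V))).card < 2 * Frac.card := by
        have hstrict : ∑ e ∈ Frac, (Tight.filter (fun u : V => u ∈ (e : Sym2 V))).card
            < ∑ _e ∈ Frac, 2 :=
          Finset.sum_lt_sum (fun e he => hle2 e he)
            ⟨f₀, hf₀, lt_of_le_of_ne (hle2 f₀ hf₀) hne₀⟩
        simpa [Finset.sum_const, mul_comm] using hstrict
      omega
    have hend : ∀ e : G.edgeSet, e ∈ Frac → ∀ v, v ∈ (e : Sym2 V) → v ∈ Tight := by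
      intro e he v hv
      obtain ⟨a, b, hab, -, hrep⟩ := exists_rep e
      have hsub : Tight.filter (fun u : V => u ∈ (e : Sym2 V)) ⊆ {a, b} := by
        intro u hu
        rw [Finset.mem_filter, hrep, Sym2.mem_iff] at hu
        simpa using hu.2
      have hcard2 : ({a, b} : Finset V).card = 2 := by
        rw [Finset.card_insert_of_notMem (by simpa using hab), Finset.card_singleton]
      have heqf : Tight.filter (fun u : V => u ∈ (e : Sym2 V)) = {a, b} :=
        Finset.eq_of_subset_of_card_le hsub (by rw [hcard2, hall2 e he])
      have hvab : v = a ∨ v = b := by rwa [hrep, Sym2.mem_iff] at hv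
      have hvmem : v ∈ ({a, b} : Finset V) := by
        rcases hvab with rfl | rfl <;> simp
      rw [← heqf] at hvmem
      exact (Finset.mem_filter.mp hvmem).1
    obtain ⟨a₀, b₀, -, -, hrep₀⟩ := exists_rep e₀
    have ha₀ : a₀ ∈ Tight := hend e₀ he₀F a₀ (by rw [hrep₀]; exact Sym2.mem_mk_left _ _)
    -- sign functional from the 2-coloring
    set sgn : V → ℝ := fun u => if C u = 0 then 1 else -1 with hsgn
    have hsgn_sq : ∀ u, sgn u * sgn u = 1 := by
      intro u; rw [hsgn]; dsimp only; split <;> norm_num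
    have hsgn_add : ∀ a b, G.Adj a b → sgn a + sgn b = 0 := by
      intro a b hadj
      have hne := C.valid hadj
      have hcases : ∀ i j : Fin 2, i ≠ j → (i = 0 ∧ j ≠ 0) ∨ (i ≠ 0 ∧ j = 0) := by decide
      rw [hsgn]; dsimp only
      rcases hcases _ _ hne with ⟨h1, h2⟩ | ⟨h1, h2⟩ <;> simp [h1, h2]
    let L : ({u // u ∈ Tight} → ℝ) →ₗ[ℝ] ℝ :=
      { toFun := fun y => ∑ u : {u // u ∈ Tight}, sgn u * y u
        map_add' := by
          intro y z
          rw [← Finset.sum_add_distrib]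
          exact Finset.sum_congr rfl fun u _ => by simp [mul_add]
        map_smul' := by
          intro c y
          simp only [RingHom.id_apply, smul_eq_mul]
          rw [Finset.mul_sum]
          exact Finset.sum_congr rfl fun u _ => by simp only [Pi.smul_apply, smul_eq_mul]; ring }
    have hLφ : ∀ dl, L (φ dl) = 0 := by
      intro dl
      show (∑ u : {u // u ∈ Tight}, sgn ↑u * ∑ e : {e // e ∈ Frac},
        if (u : V) ∈ ((e : G.edgeSet) : Sym2 V) then dl e else 0) = 0
      have step1 : ∀ u : {u // u ∈ Tight},
          sgn ↑u * (∑ e : {e // e ∈ Frac},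
            if (u : V) ∈ ((e : G.edgeSet) : Sym2 V) then dl e else 0)
          = ∑ e : {e // e ∈ Frac},
            (if (u : V) ∈ ((e : G.edgeSet) : Sym2 V) then sgn ↑u else 0) * dl e := by
        intro u
        rw [Finset.mul_sum]
        exact Finset.sum_congr rfl fun e _ => by split <;> simp
      rw [Finset.sum_congr rfl (fun u _ => step1 u), Finset.sum_comm]
      apply Finset.sum_eq_zero
      intro e _
      rw [← Finset.sum_mul]
      suffices h : (∑ u : {u // u ∈ Tight},
          if (u : V) ∈ ((e : G.edgeSet) : Sym2 V) then sgn ↑u else 0) = 0 by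
        rw [h, zero_mul]
      obtain ⟨a, b, habne, hadj, hrep⟩ := exists_rep (e : G.edgeSet)
      have haT : a ∈ Tight := hend _ e.2 a (by rw [hrep]; exact Sym2.mem_mk_left _ _)
      have hbT : b ∈ Tight := hend _ e.2 b (by rw [hrep]; exact Sym2.mem_mk_right _ _)
      rw [Finset.sum_coe_sort Tight
        (fun u : V => if u ∈ ((e : G.edgeSet) : Sym2 V) then sgn u else 0), ← Finset.sum_filter]
      have hfe : Tight.filter (fun u : V => u ∈ ((e : G.edgeSet) : Sym2 V)) = {a, b} := by
        ext u
        simp only [Finset.mem_filter, Finset.mem_insert, Finset.mem_singleton, hrep,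
          Sym2.mem_iff]
        constructor
        · rintro ⟨-, h⟩; exact h
        · rintro (rfl | rfl)
          · exact ⟨haT, Or.inl rfl⟩
          · exact ⟨hbT, Or.inr rfl⟩
      rw [hfe, Finset.sum_pair habne]
      exact hsgn_add a b hadj
    have hrange : LinearMap.range φ ≤ LinearMap.ker L := by
      rintro y ⟨dl, rfl⟩
      exact LinearMap.mem_ker.mpr (hLφ dl)
    have hLsurj : Function.Surjective L := by
      intro r
      refine ⟨(r * sgn a₀) • (Pi.single (⟨a₀, ha₀⟩ : {u // u ∈ Tight}) (1:ℝ) :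
        {u // u ∈ Tight} → ℝ), ?_⟩
      show (∑ u : {u // u ∈ Tight},
        sgn ↑u * ((r * sgn a₀) • (Pi.single (⟨a₀, ha₀⟩ : {u // u ∈ Tight}) (1:ℝ) :
          {u // u ∈ Tight} → ℝ)) u) = r
      have : ∀ u : {u // u ∈ Tight},
          sgn ↑u * ((r * sgn a₀) • (Pi.single (⟨a₀, ha₀⟩ : {u // u ∈ Tight}) (1:ℝ) :
            {u // u ∈ Tight} → ℝ)) u
          = if u = ⟨a₀, ha₀⟩ then sgn ↑u * (r * sgn a₀) else 0 := by
        intro u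
        simp only [Pi.smul_apply, smul_eq_mul, Pi.single_apply]
        split <;> simp
      rw [Finset.sum_congr rfl (fun u _ => this u), Finset.sum_ite_eq' Finset.univ]
      simp only [Finset.mem_univ, if_pos]
      linear_combination r * hsgn_sq a₀
    have hker : Module.finrank ℝ (LinearMap.ker L) + 1
        = Fintype.card {u // u ∈ Tight} := by
      have h1 := LinearMap.finrank_range_add_finrank_ker L
      rw [LinearMap.range_eq_top.mpr hLsurj, finrank_top, Module.finrank_self,
        Module.finrank_fintype_fun_eq_card] at h1
      omega
    have hchain : Fintype.card {e // e ∈ Frac} ≤ Module.finrank ℝ (LinearMap.ker L) := by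
      have h2 := LinearMap.finrank_range_of_inj hinj
      have h3 := Submodule.finrank_mono hrange
      rw [h2, Module.finrank_fintype_fun_eq_card] at h3
      exact h3
    have hαpos : 0 < Fintype.card {e // e ∈ Frac} := by
      rw [hcardα]; exact Finset.card_pos.mpr ⟨e₀, he₀F⟩
    have hTF : 2 * Tight.card ≤ 2 * Frac.card := le_trans hge (hcount ▸ hle)
    omega
  obtain ⟨dl, hdlne, hdl0⟩ := hexistsdl
  refine ⟨fun e => if h : e ∈ Frac then dl ⟨e, h⟩ else 0, ?_, ?_, ?_⟩
  · intro h0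
    apply hdlne
    funext e
    have h := congrFun h0 (e : G.edgeSet)
    simpa [e.2] using h
  · intro e he
    by_cases h : e ∈ Frac
    · rw [hFrac, Finset.mem_filter] at h; exact h.2
    · exact absurd (by simp [h] : (fun e => if h : e ∈ Frac then dl ⟨e, h⟩ else 0) e = 0) he
  · intro u hu
    by_cases htouch : ∃ e ∈ Frac, u ∈ (e : Sym2 V)
    · have huT : u ∈ Tight := by
        rw [hTight, Finset.mem_filter]; exact ⟨Finset.mem_univ _, hu, htouch⟩
      have hzero := congrFun hdl0 ⟨u, huT⟩
      have hstep : sumAt G (fun e => if h : e ∈ Frac then dl ⟨e, h⟩ else 0) u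
          = ∑ e : {e // e ∈ Frac},
            if (u : V) ∈ ((e : G.edgeSet) : Sym2 V) then dl e else 0 := by
        rw [sumAt, ← Finset.sum_subset (Finset.subset_univ Frac)
          (f := fun e : G.edgeSet =>
            if u ∈ (e : Sym2 V) then (if h : e ∈ Frac then dl ⟨e, h⟩ else 0) else 0)
          (fun e _ heF => by simp [heF]),
          ← Finset.sum_coe_sort Frac]
        refine Finset.sum_congr rfl fun e _ => ?_
        rw [dif_pos e.2]
      rw [hstep]
      exact hzero
    · push_neg at htouch
      rw [sumAt]
      apply Finset.sum_eq_zero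
      intro e _
      by_cases hue : u ∈ (e : Sym2 V)
      · have heF : e ∉ Frac := fun hF => htouch e hF hue
        simp [hue, heF]
      · simp [hue]


end Aux

theorem matchingPolytope_extremePoints
    {V : Type} [Fintype V] [DecidableEq V] (G : SimpleGraph V) [Fintype G.edgeSet]
    (hbip : G.Colorable 2) :
    Set.extremePoints ℝ (matchingPolytope G) =
      {x | ∃ M : Set (Sym2 V), IsMatchingSet G M ∧ x = edgeIndicator G M} := by
  classical
  ext x
  simp only [Set.mem_setOf_eq]
  constructor
  · intro hx
    have hP := hx.1
    obtain ⟨hx0, hxsum⟩ := mem_mp_iff.mp hP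
    have h01 : ∀ e : G.edgeSet, x e = 0 ∨ x e = 1 := by
      by_contra hne
      push_neg at hne
      obtain ⟨e, he0, he1⟩ := hne
      have hfrac : ∃ e₀ : G.edgeSet, 0 < x e₀ ∧ x e₀ < 1 :=
        ⟨e, lt_of_le_of_ne (hx0 e) (Ne.symm he0),
          lt_of_le_of_ne (le_one_of_mem hx0 hxsum e) he1⟩
      obtain ⟨d, hdne, hd1, hd2⟩ := exists_direction hbip hP hfrac
      refine not_extreme_of_direction hP hdne (fun e' he' => (hd1 e' he').1) ?_ hx
      intro u hu
      rcases lt_or_eq_of_le (hxsum u) with h | h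
      · exact h
      · exact absurd (hd2 u h) hu
    refine ⟨{z : Sym2 V | ∃ h : z ∈ G.edgeSet, x ⟨z, h⟩ = 1}, ⟨?_, ?_⟩, ?_⟩
    · rintro z ⟨h, -⟩; exact h
    · rintro e ⟨he, hxe⟩ f ⟨hf, hxf⟩ hef v hv hvf
      have hne : (⟨e, he⟩ : G.edgeSet) ≠ ⟨f, hf⟩ := fun h => hef (congrArg Subtype.val h)
      have hpair := pair_le_sumAt (G := G) hx0 (e := ⟨e, he⟩) (f := ⟨f, hf⟩) hv hvf hne
      have hsum := hxsum v
      rw [hxe, hxf] at hpair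
      linarith
    · funext e
      by_cases hm : (e : Sym2 V) ∈ {z : Sym2 V | ∃ h : z ∈ G.edgeSet, x ⟨z, h⟩ = 1}
      · obtain ⟨h, hxe⟩ := hm
        have hsub : (⟨(e : Sym2 V), h⟩ : G.edgeSet) = e := Subtype.ext rfl
        rw [hsub] at hxe
        simp only [edgeIndicator, Set.indicator_apply, Set.mem_setOf_eq]
        rw [if_pos (show ∃ h' : (e : Sym2 V) ∈ G.edgeSet, x ⟨(e : Sym2 V), h'⟩ = 1 from
          ⟨h, by rw [hsub]; exact hxe⟩)]
        exact hxe
      · simp only [edgeIndicator, Set.indicator_apply, Set.mem_setOf_eq]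
        rw [if_neg (show ¬ ∃ h' : (e : Sym2 V) ∈ G.edgeSet, x ⟨(e : Sym2 V), h'⟩ = 1 from hm)]
        rcases h01 e with h | h
        · exact h
        · exfalso
          apply hm
          refine ⟨e.2, ?_⟩
          have hsub : (⟨(e : Sym2 V), e.2⟩ : G.edgeSet) = e := Subtype.ext rfl
          rw [hsub]
          exact h
  · rintro ⟨M, hM, rfl⟩
    exact indicator_extreme hM
end

section
/- Every network matrix is totally unimodular: if (V,E) is a finite directed graph and (V,T) is a directed tree on the same vertex set, then the |T| × |E| matrix A with A_{t,e} = +1 if the tree arc t occurs in the forward direction on the unique path in T from the tail of e to the head of e, A_{t,e} = −1 if t occurs in the backward direction on that path, and A_{t,e} = 0 otherwise, is totally unimodular. -/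
section Helpers

lemma signRange_zero : (0:ℝ) ∈ Set.range SignType.cast := ⟨0, by simp⟩
lemma signRange_one : (1:ℝ) ∈ Set.range SignType.cast := ⟨1, by simp⟩
lemma signRange_neg_one : (-1:ℝ) ∈ Set.range SignType.cast := ⟨-1, by simp⟩

lemma signRange_mul {x y : ℝ} (hx : x ∈ Set.range SignType.cast)
    (hy : y ∈ Set.range SignType.cast) : x * y ∈ Set.range SignType.cast := by
  obtain ⟨s, rfl⟩ := hx; obtain ⟨t, rfl⟩ := hy
  exact ⟨s * t, by push_cast; ring⟩

lemma signRange_neg_one_pow (m : ℕ) : ((-1:ℝ)) ^ m ∈ Set.range SignType.cast := by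
  rcases neg_one_pow_eq_or ℝ m with h | h <;> rw [h]
  · exact signRange_one
  · exact signRange_neg_one

lemma sum_indicator_inj {k : ℕ} {W : Type} [DecidableEq W] (ρ' : Fin k → W)
    (hρ : Function.Injective ρ') (c : W) :
    ∑ i, (if ρ' i = c then (1:ℝ) else 0) = if ∃ i, ρ' i = c then 1 else 0 := by
  by_cases h : ∃ i, ρ' i = c
  · obtain ⟨i₀, rfl⟩ := h
    rw [if_pos ⟨i₀, rfl⟩, Finset.sum_eq_single i₀]
    · simp
    · intro i _ hi
      exact if_neg (fun hh => hi (hρ hh))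
    · simp
  · rw [if_neg h]
    exact Finset.sum_eq_zero fun i _ => if_neg (fun hh => h ⟨i, hh⟩)

lemma incidence_det_aux : ∀ (k : ℕ) {W : Type} [DecidableEq W] (ρ' : Fin k → W)
    (_ : Function.Injective ρ') (a b : Fin k → W),
    (Matrix.of fun i j : Fin k =>
        ((if ρ' i = a j then (1:ℝ) else 0) - (if ρ' i = b j then 1 else 0))).det
      ∈ Set.range SignType.cast := by
  intro k
  induction k with
  | zero =>
    intro W _ ρ' hρ a b
    exact ⟨1, by simp [Matrix.det_fin_zero]⟩
  | succ n ih =>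
    intro W _ ρ' hρ a b
    set M : Matrix (Fin (n+1)) (Fin (n+1)) ℝ := Matrix.of fun i j =>
      ((if ρ' i = a j then (1:ℝ) else 0) - (if ρ' i = b j then 1 else 0)) with hM
    have hMentry : ∀ i j, M i j ∈ Set.range SignType.cast := by
      intro i j
      simp only [hM, Matrix.of_apply]
      split_ifs
      · exact ⟨0, by simp⟩
      · exact ⟨1, by simp⟩
      · exact ⟨-1, by simp⟩
      · exact ⟨0, by simp⟩
    by_cases h1 : ∃ j, ∀ i, M i j = 0
    · obtain ⟨j, hj⟩ := h1
      rw [Matrix.det_eq_zero_of_column_eq_zero j hj]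
      exact signRange_zero
    by_cases h2 : ∃ j i₀, M i₀ j ≠ 0 ∧ ∀ i, i ≠ i₀ → M i j = 0
    · obtain ⟨j, i₀, hne, hz⟩ := h2
      rw [Matrix.det_succ_column M j, Finset.sum_eq_single i₀]
      · have hminor : M.submatrix i₀.succAbove j.succAbove =
            Matrix.of fun i j' : Fin n =>
              ((if ρ' (i₀.succAbove i) = a (j.succAbove j') then (1:ℝ) else 0)
                - (if ρ' (i₀.succAbove i) = b (j.succAbove j') then 1 else 0)) := rfl
        rw [hminor]
        exact signRange_mul (signRange_mul (signRange_neg_one_pow _) (hMentry i₀ j))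
          (ih _ (hρ.comp Fin.succAbove_right_injective) _ _)
      · intro i _ hi
        rw [hz i hi]; ring
      · simp
    have hsum : ∀ j, ∑ i, M i j = 0 := by
      intro j
      have hPa : (∃ i, ρ' i = a j) ↔ (∃ i, ρ' i = b j) := by
        constructor
        · rintro ⟨i₀, hi₀⟩
          by_contra hb
          apply h2
          refine ⟨j, i₀, ?_, ?_⟩
          · simp only [hM, Matrix.of_apply, if_pos hi₀,
              if_neg (fun hh => hb ⟨i₀, hh⟩)]; norm_num
          · intro i hi
            simp only [hM, Matrix.of_apply,
              if_neg (fun hh : ρ' i = a j => hi (hρ (hh.trans hi₀.symm))),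
              if_neg (fun hh => hb ⟨i, hh⟩)]; ring
        · rintro ⟨i₀, hi₀⟩
          by_contra ha
          apply h2
          refine ⟨j, i₀, ?_, ?_⟩
          · simp only [hM, Matrix.of_apply, if_pos hi₀,
              if_neg (fun hh => ha ⟨i₀, hh⟩)]; norm_num
          · intro i hi
            simp only [hM, Matrix.of_apply,
              if_neg (fun hh : ρ' i = b j => hi (hρ (hh.trans hi₀.symm))),
              if_neg (fun hh => ha ⟨i, hh⟩)]; ring
      have : ∑ i, M i j = (if ∃ i, ρ' i = a j then (1:ℝ) else 0)
          - (if ∃ i, ρ' i = b j then 1 else 0) := by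
        simp only [hM, Matrix.of_apply, Finset.sum_sub_distrib,
          sum_indicator_inj ρ' hρ]
      rw [this]
      by_cases h : ∃ i, ρ' i = a j
      · rw [if_pos h, if_pos (hPa.mp h)]; ring
      · rw [if_neg h, if_neg (fun hh => h (hPa.mpr hh))]; ring
    have hdet : M.det = 0 := by
      rw [← Matrix.exists_vecMul_eq_zero_iff]
      refine ⟨fun _ => 1, fun h => by simpa using congrFun h 0, ?_⟩
      funext j
      simp only [Matrix.vecMul, dotProduct, one_mul, Pi.zero_apply]
      exact hsum j
    rw [hdet]; exact signRange_zero

lemma det_of_incidence_cols {V' : Type} [Fintype V'] [DecidableEq V'] {W : Type} [DecidableEq W]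
    (val : V' → W) (hval : Function.Injective val) (C : Matrix V' V' ℝ)
    (hC : ∀ j, ∃ a b : W, ∀ v,
      C v j = (if val v = a then (1:ℝ) else 0) - (if val v = b then 1 else 0)) :
    C.det ∈ Set.range SignType.cast := by
  classical
  choose a b hab using hC
  have eqv := (Fintype.equivFin V').symm
  rw [← Matrix.det_submatrix_equiv_self eqv C]
  have hCeq : C.submatrix eqv eqv = Matrix.of fun i j =>
      ((if (val ∘ eqv) i = a (eqv j) then (1:ℝ) else 0)
        - (if (val ∘ eqv) i = b (eqv j) then 1 else 0)) := by
    ext i j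
    exact hab (eqv j) (eqv i)
  rw [hCeq]
  exact incidence_det_aux _ _ (hval.comp eqv.injective) _ _

lemma walk_darts_sum {V : Type} {G : SimpleGraph V} [DecidableEq V] {u v : V}
    (p : G.Walk u v) (x : V) :
    (p.darts.map (fun d => (if x = d.snd then (1:ℝ) else 0) - (if x = d.fst then 1 else 0))).sum
      = (if x = v then 1 else 0) - (if x = u then 1 else 0) := by
  induction p with
  | nil => simp
  | cons h q ih =>
    simp only [SimpleGraph.Walk.darts_cons, List.map_cons, List.sum_cons, ih]
    ring

end Helpers

/-- The unique path between two vertices of a tree, as a walk. -/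
noncomputable def treePath {V : Type} {T : SimpleGraph V} (hT : T.IsTree) (u v : V) :
    T.Walk u v :=
  (hT.existsUnique_path u v).choose

lemma treePath_isPath {V : Type} {T : SimpleGraph V} (hT : T.IsTree) (u v : V) :
    (treePath hT u v).IsPath :=
  (hT.existsUnique_path u v).choose_spec.1

open scoped Classical in
/-- The network matrix generated by a directed tree and a directed graph on a common
vertex set `V`.  The tree arcs (rows) are given by their tails `tt` and heads `th`;
the graph arcs (columns) are given by their tails `tl` and heads `hd` (parallel arcs
are allowed).  The entry at `(r, e)` is `+1` if the tree arc `r` occurs forward on the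
unique tree path from `tl e` to `hd e`, `-1` if it occurs backward, and `0` otherwise. -/
noncomputable def networkMatrix {V ρ ι : Type} (T : SimpleGraph V) (hT : T.IsTree)
    (tt th : ρ → V) (hadj : ∀ r, T.Adj (tt r) (th r)) (tl hd : ι → V) :
    Matrix ρ ι ℝ :=
  Matrix.of fun r e =>
    if SimpleGraph.Dart.mk (tt r, th r) (hadj r) ∈ (treePath hT (tl e) (hd e)).darts
      then 1
    else if SimpleGraph.Dart.mk (th r, tt r) (hadj r).symm ∈ (treePath hT (tl e) (hd e)).darts
      then -1
    else 0

/-- `A` is a network matrix: it is generated by some directed tree (rows in bijection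
with the tree arcs) and some directed graph (columns) on a common finite vertex set. -/
def IsNetworkMatrix {ρ ι : Type} (A : Matrix ρ ι ℝ) : Prop :=
  ∃ (V : Type) (_ : Fintype V) (T : SimpleGraph V) (hT : T.IsTree)
    (tt th : ρ → V) (hadj : ∀ r, T.Adj (tt r) (th r)) (tl hd : ι → V),
    Function.Injective (fun r => s(tt r, th r)) ∧
    (∀ e ∈ T.edgeSet, ∃ r, s(tt r, th r) = e) ∧
    A = networkMatrix T hT tt th hadj tl hd

lemma key_identity {V ρ ι : Type} [Fintype V] [Fintype ρ] [DecidableEq V]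
    (T : SimpleGraph V) (hT : T.IsTree)
    (tt th : ρ → V) (hadj : ∀ r, T.Adj (tt r) (th r)) (tl hd : ι → V)
    (hinj : Function.Injective fun r => s(tt r, th r))
    (hsurj : ∀ e ∈ T.edgeSet, ∃ r, s(tt r, th r) = e) (e : ι) (x : V) :
    ∑ r, networkMatrix T hT tt th hadj tl hd r e *
        ((if x = th r then (1:ℝ) else 0) - (if x = tt r then 1 else 0))
      = (if x = hd e then 1 else 0) - (if x = tl e then 1 else 0) := by
  classical
  set p := treePath hT (tl e) (hd e) with hp
  have hpath : p.IsPath := treePath_isPath hT _ _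
  have hedges : (p.darts.map SimpleGraph.Dart.edge).Nodup := hpath.isTrail.edges_nodup
  have hdnodup : p.darts.Nodup := hedges.of_map _
  have hedgeinj : ∀ d1 ∈ p.darts, ∀ d2 ∈ p.darts,
      d1.edge = d2.edge → d1 = d2 := List.inj_on_of_nodup_map hedges
  set dplus : ρ → T.Dart := fun r => SimpleGraph.Dart.mk (tt r, th r) (hadj r) with hdplus
  set dminus : ρ → T.Dart := fun r => SimpleGraph.Dart.mk (th r, tt r) (hadj r).symm with hdminus
  have hedplus : ∀ r, (dplus r).edge = s(tt r, th r) := fun r => rfl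
  have hedminus : ∀ r, (dminus r).edge = s(tt r, th r) := fun r => Sym2.eq_swap
  have hne : ∀ r, dplus r ≠ dminus r := by
    intro r h
    have := congrArg (fun d : T.Dart => d.fst) h
    exact (hadj r).ne (by simpa [hdplus, hdminus] using this)
  set A := networkMatrix T hT tt th hadj tl hd with hA
  set F : ρ → ℝ := fun r => A r e * ((if x = th r then (1:ℝ) else 0) - (if x = tt r then 1 else 0))
    with hF
  set g : T.Dart → ℝ := fun d => (if x = d.snd then (1:ℝ) else 0) - (if x = d.fst then 1 else 0)
    with hg
  have hstep1 : ∑ r, F r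
      = ∑ r ∈ Finset.univ.filter (fun r => dplus r ∈ p.darts ∨ dminus r ∈ p.darts), F r := by
    symm
    apply Finset.sum_filter_of_ne
    intro r _ hr
    by_contra hc
    push_neg at hc
    apply hr
    simp only [hdplus, hdminus] at hc
    simp only [hF, hA, networkMatrix, Matrix.of_apply, ← hp, if_neg hc.1, if_neg hc.2, zero_mul]
  have hstep2 : ∑ r ∈ Finset.univ.filter (fun r => dplus r ∈ p.darts ∨ dminus r ∈ p.darts), F r
      = ∑ d ∈ p.darts.toFinset, g d := by
    apply Finset.sum_bij (fun r _ => if dplus r ∈ p.darts then dplus r else dminus r)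
    · intro r hr
      rw [Finset.mem_filter] at hr
      rw [List.mem_toFinset]
      by_cases h : dplus r ∈ p.darts
      · rwa [if_pos h]
      · rw [if_neg h]
        exact hr.2.resolve_left h
    · intro r1 h1 r2 h2 heq
      have : s(tt r1, th r1) = s(tt r2, th r2) := by
        have e1 : (if dplus r1 ∈ p.darts then dplus r1 else dminus r1).edge
            = s(tt r1, th r1) := by split_ifs <;> [exact hedplus r1; exact hedminus r1]
        have e2 : (if dplus r2 ∈ p.darts then dplus r2 else dminus r2).edge
            = s(tt r2, th r2) := by split_ifs <;> [exact hedplus r2; exact hedminus r2]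
        rw [← e1, ← e2, heq]
      exact hinj this
    · intro d hd
      rw [List.mem_toFinset] at hd
      have hdedge : d.edge ∈ T.edgeSet :=
        p.edges_subset_edgeSet (List.mem_map_of_mem hd)
      obtain ⟨r, hr⟩ := hsurj d.edge hdedge
      have : s(tt r, th r) = s(d.fst, d.snd) := by rw [hr]; rfl
      rw [Sym2.eq_iff] at this
      rcases this with ⟨h1, h2⟩ | ⟨h1, h2⟩
      · have hdp : dplus r = d := by
          apply SimpleGraph.Dart.ext
          simp [hdplus, h1, h2]
        refine ⟨r, Finset.mem_filter.mpr ⟨Finset.mem_univ r, Or.inl (hdp ▸ hd)⟩, ?_⟩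
        rw [if_pos (hdp ▸ hd), hdp]
      · have hdm : dminus r = d := by
          apply SimpleGraph.Dart.ext
          simp [hdminus, h1, h2]
        have hnp : dplus r ∉ p.darts := by
          intro hcon
          exact hne r (hedgeinj _ hcon _ (hdm ▸ hd) ((hedplus r).trans (hedminus r).symm))
        refine ⟨r, Finset.mem_filter.mpr ⟨Finset.mem_univ r, Or.inr (hdm ▸ hd)⟩, ?_⟩
        rw [if_neg hnp, hdm]
    · intro r hr
      rw [Finset.mem_filter] at hr
      by_cases h : dplus r ∈ p.darts
      · rw [if_pos h]
        have h' : SimpleGraph.Dart.mk (tt r, th r) (hadj r) ∈ p.darts := h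
        simp only [hF, hA, networkMatrix, Matrix.of_apply, ← hp, if_pos h', one_mul, hg, hdplus]
      · have hm : dminus r ∈ p.darts := hr.2.resolve_left h
        rw [if_neg h]
        have h' : SimpleGraph.Dart.mk (tt r, th r) (hadj r) ∉ p.darts := h
        have hm' : SimpleGraph.Dart.mk (th r, tt r) (hadj r).symm ∈ p.darts := hm
        simp only [hF, hA, networkMatrix, Matrix.of_apply, ← hp, if_neg h', if_pos hm']
        simp only [hg, hdminus]
        ring_nf
  rw [hstep1, hstep2, List.sum_toFinset _ hdnodup]
  exact walk_darts_sum p x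

/-- **Every network matrix is totally unimodular.** -/
theorem networkMatrix_isTotallyUnimodular
    {V ρ ι : Type} [Fintype V] (T : SimpleGraph V) (hT : T.IsTree)
    (tt th : ρ → V) (hadj : ∀ r, T.Adj (tt r) (th r)) (tl hd : ι → V)
    (hinj : Function.Injective fun r => s(tt r, th r))
    (hsurj : ∀ e ∈ T.edgeSet, ∃ r, s(tt r, th r) = e) :
    (networkMatrix T hT tt th hadj tl hd).IsTotallyUnimodular := by
  classical
  -- `ρ` is finite since it embeds into the edge set of `T`
  have hρfin : Finite ρ := by
    have hi : Function.Injective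
        (fun r => (⟨s(tt r, th r), T.mem_edgeSet.mpr (hadj r)⟩ : T.edgeSet)) := by
      intro r1 r2 h
      exact hinj (Subtype.ext_iff.mp h)
    exact Finite.of_injective _ hi
  cases nonempty_fintype ρ
  obtain ⟨w⟩ := hT.isConnected.nonempty
  set V' := {v : V // v ≠ w} with hV'
  -- the incidence matrix of the tree arcs, with row `w` removed
  set B : Matrix V' ρ ℝ := Matrix.of fun v r =>
    (if v.val = th r then (1:ℝ) else 0) - (if v.val = tt r then 1 else 0) with hB
  have hmul : ∀ (ι' : Type) (tl' hd' : ι' → V) (e : ι') (v : V'),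
      (B * networkMatrix T hT tt th hadj tl' hd') v e
        = (if v.val = hd' e then (1:ℝ) else 0) - (if v.val = tl' e then 1 else 0) := by
    intro ι' tl' hd' e v
    rw [Matrix.mul_apply]
    rw [show ∑ r, B v r * networkMatrix T hT tt th hadj tl' hd' r e
        = ∑ r, networkMatrix T hT tt th hadj tl' hd' r e * B v r from
      Finset.sum_congr rfl fun r _ => mul_comm _ _]
    exact key_identity T hT tt th hadj tl' hd' hinj hsurj e v.val
  -- invertibility of `B`, using the network matrix of the star at `w`
  set A₀ : Matrix ρ V' ℝ :=
    networkMatrix T hT tt th hadj (fun _ : V' => w) Subtype.val with hA₀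
  have hBA₀ : B * A₀ = 1 := by
    ext v v'
    rw [hA₀, hmul V' (fun _ => w) Subtype.val v' v]
    rw [if_neg v.2, Matrix.one_apply]
    by_cases h : v = v'
    · rw [if_pos (Subtype.ext_iff.mp h), if_pos h]; ring
    · rw [if_neg (fun hh => h (Subtype.ext hh)), if_neg h]; ring
  -- cardinalities match
  have hcard : Fintype.card ρ = Fintype.card V' := by
    have hbij : Function.Bijective
        (fun r => (⟨s(tt r, th r), T.mem_edgeSet.mpr (hadj r)⟩ : T.edgeSet)) := by
      constructor
      · intro r1 r2 h
        exact hinj (Subtype.ext_iff.mp h)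
      · rintro ⟨e, he⟩
        obtain ⟨r, hr⟩ := hsurj e he
        exact ⟨r, Subtype.ext hr⟩
    have h1 : Fintype.card ρ = Fintype.card T.edgeSet := Fintype.card_of_bijective hbij
    have h2 : Fintype.card T.edgeSet + 1 = Fintype.card V := by
      rw [← Set.toFinset_card]
      exact hT.card_edgeFinset
    have h3 : Fintype.card V' + 1 = Fintype.card V := by
      have h4 : Fintype.card V' = Fintype.card V - 1 := by
        show Fintype.card {v : V // ¬ (v = w)} = Fintype.card V - 1
        rw [Fintype.card_subtype_compl, Fintype.card_subtype_eq]
      have h5 : 0 < Fintype.card V := Fintype.card_pos_iff.mpr ⟨w⟩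
      omega
    omega
  set σ : ρ ≃ V' := Fintype.equivOfCardEq hcard with hσ
  set B' : Matrix V' V' ℝ := B.submatrix id σ.symm with hB'
  -- determinant of B' is ±1
  have hB'shape : ∀ j : V', ∃ a b : V, ∀ v : V',
      B' v j = (if v.val = a then (1:ℝ) else 0) - (if v.val = b then 1 else 0) :=
    fun j => ⟨th (σ.symm j), tt (σ.symm j), fun v => rfl⟩
  have hB'range : B'.det ∈ Set.range SignType.cast :=
    det_of_incidence_cols Subtype.val Subtype.val_injective B' hB'shape
  have hB'inv : B'.det * (A₀.submatrix σ.symm id).det = 1 := by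
    rw [← Matrix.det_mul, hB', Matrix.submatrix_mul_equiv B A₀ id σ.symm id, hBA₀]
    simp
  have hB'sq : B'.det * B'.det = 1 := by
    obtain ⟨s, hs⟩ := hB'range
    have hne : B'.det ≠ 0 := by
      intro h
      rw [h, zero_mul] at hB'inv
      exact zero_ne_one hB'inv
    cases s with
    | zero => exact absurd hs.symm (by simpa using hne)
    | neg => rw [← hs]; norm_num
    | pos => rw [← hs]; norm_num
  -- main computation
  intro k f g hf hg
  set A := networkMatrix T hT tt th hadj tl hd with hA
  set D : Matrix ρ ρ ℝ := Matrix.of fun r r' =>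
    if h : ∃ i, f i = r' then A r (g h.choose) else (if r = r' then 1 else 0) with hD
  have hD1 : ∀ (r : ρ) (i : Fin k), D r (f i) = A r (g i) := by
    intro r i
    have h : ∃ i', f i' = f i := ⟨i, rfl⟩
    rw [hD]
    simp only [Matrix.of_apply]
    rw [dif_pos h]
    congr 1
    exact congrArg g (hf h.choose_spec)
  have hD2 : ∀ (r r' : ρ), (¬ ∃ i, f i = r') → D r r' = if r = r' then 1 else 0 := by
    intro r r' h
    rw [hD]
    simp only [Matrix.of_apply]
    rw [dif_neg h]
  -- det D = det of the submatrix
  have hdetD : D.det = (A.submatrix f g).det := by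
    have hτbij : Function.Bijective
        (Sum.elim f (Subtype.val : {r : ρ // r ∉ Set.range f} → ρ)) := by
      constructor
      · rintro (i1 | r1) (i2 | r2) h
        · rw [hf h]
        · exact absurd ⟨i1, h⟩ r2.2
        · exact absurd ⟨i2, h.symm⟩ r1.2
        · rw [Subtype.ext h]
      · intro r
        by_cases h : r ∈ Set.range f
        · obtain ⟨i, hi⟩ := h
          exact ⟨Sum.inl i, hi⟩
        · exact ⟨Sum.inr ⟨r, h⟩, rfl⟩
    set τ : (Fin k ⊕ {r : ρ // r ∉ Set.range f}) ≃ ρ := Equiv.ofBijective _ hτbij with hτ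
    have hτl : ∀ i, τ (Sum.inl i) = f i := fun i => rfl
    have hτr : ∀ r, τ (Sum.inr r) = r.val := fun r => rfl
    have hblocks : D.submatrix τ τ =
        Matrix.fromBlocks (A.submatrix f g) 0
          (A.submatrix (fun r : {r : ρ // r ∉ Set.range f} => r.val) g) 1 := by
      ext x y
      cases x with
      | inl i =>
        cases y with
        | inl j =>
          simp only [Matrix.submatrix_apply, hτl, Matrix.fromBlocks_apply₁₁]
          exact hD1 (f i) j
        | inr r =>
          simp only [Matrix.submatrix_apply, hτl, hτr, Matrix.fromBlocks_apply₁₂]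
          rw [hD2 _ _ (fun hh => r.2 (hh.imp fun i hi => hi))]
          rw [if_neg (fun hh => r.2 ⟨i, hh⟩)]
          rfl
      | inr r =>
        cases y with
        | inl j =>
          simp only [Matrix.submatrix_apply, hτl, hτr, Matrix.fromBlocks_apply₂₁]
          exact hD1 r.val j
        | inr r' =>
          simp only [Matrix.submatrix_apply, hτr, Matrix.fromBlocks_apply₂₂]
          rw [hD2 _ _ (fun hh => r'.2 (hh.imp fun i hi => hi))]
          rw [Matrix.one_apply]
          by_cases h : r = r'
          · rw [if_pos (Subtype.ext_iff.mp h), if_pos h]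
          · rw [if_neg (fun hh => h (Subtype.ext hh)), if_neg h]
    rw [← Matrix.det_submatrix_equiv_self τ D, hblocks,
      Matrix.det_fromBlocks_zero₁₂, Matrix.det_one, mul_one]
  -- the matrix B * D has incidence-shaped columns
  set C : Matrix V' V' ℝ := (B * D).submatrix id σ.symm with hC
  have hCshape : ∀ j : V', ∃ a b : V, ∀ v : V',
      C v j = (if v.val = a then (1:ℝ) else 0) - (if v.val = b then 1 else 0) := by
    intro j
    set r' := σ.symm j with hr'
    by_cases h : ∃ i, f i = r'
    · obtain ⟨i, hi⟩ := h
      refine ⟨hd (g i), tl (g i), fun v => ?_⟩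
      have : C v j = (B * A.submatrix id g) v i := by
        rw [hC, Matrix.submatrix_apply, Matrix.mul_apply, Matrix.mul_apply]
        apply Finset.sum_congr rfl
        intro r _
        rw [← hr', ← hi, hD1 r i]
        rfl
      rw [this]
      have heq : B * A.submatrix id g
          = B * networkMatrix T hT tt th hadj (fun i => tl (g i)) (fun i => hd (g i)) := by
        congr 1
      rw [heq]
      exact hmul (Fin k) (fun i => tl (g i)) (fun i => hd (g i)) i v
    · refine ⟨th r', tt r', fun v => ?_⟩
      rw [hC, Matrix.submatrix_apply, Matrix.mul_apply, ← hr']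
      rw [Finset.sum_eq_single r']
      · rw [hD2 _ _ h, if_pos rfl, mul_one]
        rfl
      · intro r _ hr
        rw [hD2 _ _ h, if_neg hr, mul_zero]
      · simp
  have hCrange : C.det ∈ Set.range SignType.cast :=
    det_of_incidence_cols Subtype.val Subtype.val_injective C hCshape
  -- put everything together
  have hsplit : C.det = B'.det * D.det := by
    rw [hC, hB', ← Matrix.submatrix_mul_equiv B D id σ.symm ⇑σ.symm, Matrix.det_mul,
      Matrix.det_submatrix_equiv_self σ.symm D]
  have : (A.submatrix f g).det = B'.det * C.det := by
    rw [hsplit, ← mul_assoc, hB'sq, one_mul, hdetD]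
  rw [this]
  exact signRange_mul hB'range hCrange
end
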